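/- arXiv:0903.4386 — 7 statements merged into one kernel-verified Lean document; each statement's English description precedes it below -/
import Mathlib

section
/- Let P_era(M, n, L) denote the minimum erasure probability of length-n error-free block codes (codes with zero error probability) with feedback, M equiprobable messages, and list size L. Then for any n, M, L, any n₁ ≤ n and L₁: P_era(M, n, L) ≥ P_e(M, n₁, L₁, 0) · P_era(L₁+1, n−n₁, L), where P_e(M, n₁, L₁, 0) is the minimum error probability of erasure-free length-n₁ codes with M messages and list size L₁. -/
open scoped BigOperators

/-- A fixed-length block code over input alphabet `X`, output alphabet `Y`, with
noiseless delay-free feedback, `M` messages, block length `n`, randomized decoding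
with lists of size at most `L` and an erasure option (`none`). -/
structure FBCode (X Y : Type) [Fintype X] [Fintype Y] (M n L : ℕ) where
  enc : Fin M → (t : Fin n) → (Fin t.1 → Y) → X
  dec : (Fin n → Y) → Option (Finset (Fin M)) → ℝ
  dec_nonneg : ∀ y o, 0 ≤ dec y o
  dec_sum : ∀ y, ∑ o : Option (Finset (Fin M)), dec y o = 1
  dec_size : ∀ y S, dec y (some S) ≠ 0 → S.card ≤ L

namespace FBCode

variable {X Y : Type} [Fintype X] [Fintype Y]

/-- Probability of observing output sequence `y` when message `m` is sent over the DMC `W`. -/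
noncomputable def outProb (W : X → Y → ℝ) {M n L : ℕ} (c : FBCode X Y M n L)
    (m : Fin M) (y : Fin n → Y) : ℝ :=
  ∏ t : Fin n, W (c.enc m t (fun i => y ⟨i.1, lt_trans i.2 t.2⟩)) (y t)

/-- Erasure probability of the code, uniform prior on messages. -/
noncomputable def Pera (W : X → Y → ℝ) {M n L : ℕ} (c : FBCode X Y M n L) : ℝ :=
  (M : ℝ)⁻¹ * ∑ m : Fin M, ∑ y : Fin n → Y, outProb W c m y * c.dec y none

/-- (Undetected) error probability of the code, uniform prior on messages. -/
noncomputable def Perr (W : X → Y → ℝ) {M n L : ℕ} (c : FBCode X Y M n L) : ℝ :=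
  (M : ℝ)⁻¹ * ∑ m : Fin M, ∑ y : Fin n → Y,
    outProb W c m y * ∑ S : Finset (Fin M), if m ∈ S then 0 else c.dec y (some S)

end FBCode

/-- Minimum error probability of length-`n` feedback codes with `M` equiprobable
messages, list size `L`, erasure probability at most `p`. -/
noncomputable def PeMin {X Y : Type} [Fintype X] [Fintype Y] (W : X → Y → ℝ)
    (M n L : ℕ) (p : ℝ) : ℝ :=
  sInf {e | ∃ c : FBCode X Y M n L, FBCode.Pera W c ≤ p ∧ FBCode.Perr W c = e}

/-- Minimum erasure probability of length-`n` error-free feedback codes with `M`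
equiprobable messages and list size `L`. -/
noncomputable def PeraMin {X Y : Type} [Fintype X] [Fintype Y] (W : X → Y → ℝ)
    (M n L : ℕ) : ℝ :=
  sInf {r | ∃ c : FBCode X Y M n L, FBCode.Perr W c = 0 ∧ FBCode.Pera W c = r}

-- scratch area
section Scratch
variable {X Y : Type} [Fintype X] [Fintype Y] (W : X → Y → ℝ)
variable {M n L n₁ n₂ L₁ : ℕ}

def merge (h : n₁ + n₂ = n) (y₁ : Fin n₁ → Y) (y₂ : Fin n₂ → Y) : Fin n → Y :=
  fun t => if ht : t.1 < n₁ then y₁ ⟨t.1, ht⟩ else y₂ ⟨t.1 - n₁, by have := t.2; omega⟩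

def mergeEquiv (h : n₁ + n₂ = n) : ((Fin n₁ → Y) × (Fin n₂ → Y)) ≃ (Fin n → Y) where
  toFun p := merge h p.1 p.2
  invFun y := (fun i => y ⟨i.1, by have := i.2; omega⟩, fun j => y ⟨n₁ + j.1, by have := j.2; omega⟩)
  left_inv := by
    rintro ⟨y₁, y₂⟩
    refine Prod.ext ?_ ?_ <;> funext i <;> simp only [merge]
    · rw [dif_pos i.2]
    · rw [dif_neg (by omega)]
      congr 1
      exact Fin.ext (by simp)
  right_inv := by
    intro y
    funext t
    simp only [merge]
    split_ifs with ht
    · rfl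
    · congr 1
      exact Fin.ext (by have := t.2; simp; omega)

noncomputable def P1 (h : n₁ + n₂ = n) (c : FBCode X Y M n L) (m : Fin M)
    (y₁ : Fin n₁ → Y) : ℝ :=
  ∏ t : Fin n₁, W (c.enc m ⟨t.1, by have := t.2; omega⟩
    (fun i => y₁ ⟨i.1, lt_trans i.2 t.2⟩)) (y₁ t)

noncomputable def P2 (h : n₁ + n₂ = n) (c : FBCode X Y M n L) (m : Fin M)
    (y₁ : Fin n₁ → Y) (y₂ : Fin n₂ → Y) : ℝ :=
  ∏ t : Fin n₂, W (c.enc m ⟨n₁ + t.1, by have := t.2; omega⟩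
    (fun i => merge h y₁ y₂ ⟨i.1, by have := i.2; have := t.2; omega⟩)) (y₂ t)

lemma outProb_merge (h : n₁ + n₂ = n) (c : FBCode X Y M n L) (m : Fin M)
    (y₁ : Fin n₁ → Y) (y₂ : Fin n₂ → Y) :
    FBCode.outProb W c m (merge h y₁ y₂) = P1 W h c m y₁ * P2 W h c m y₁ y₂ := by
  unfold FBCode.outProb
  rw [← Equiv.prod_comp (finSumFinEquiv.trans (finCongr h))
    (fun t => W (c.enc m t (fun i => merge h y₁ y₂ ⟨i.1, lt_trans i.2 t.2⟩)) (merge h y₁ y₂ t)),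
    Fintype.prod_sum_type]
  congr 1
  · refine Finset.prod_congr rfl fun t _ => ?_
    have hidx : (finSumFinEquiv.trans (finCongr h)) (Sum.inl t) = (⟨t.1, by have := t.2; omega⟩ : Fin n) := by
      apply Fin.ext; simp
    rw [hidx]
    have hy : merge h y₁ y₂ (⟨t.1, by have := t.2; omega⟩ : Fin n) = y₁ t := by
      simp only [merge]; rw [dif_pos t.2]
    rw [hy]
    refine congrArg₂ W (congrArg _ ?_) rfl
    funext i
    simp only [merge]
    rw [dif_pos (lt_trans i.2 t.2)]
  · refine Finset.prod_congr rfl fun t _ => ?_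
    have hidx : (finSumFinEquiv.trans (finCongr h)) (Sum.inr t) = (⟨n₁ + t.1, by have := t.2; omega⟩ : Fin n) := by
      apply Fin.ext; simp
    rw [hidx]
    have hy : merge h y₁ y₂ (⟨n₁ + t.1, by have := t.2; omega⟩ : Fin n) = y₂ t := by
      simp only [merge]; rw [dif_neg (by omega)]; congr 1; exact Fin.ext (by simp)
    rw [hy]

lemma sum_merge (h : n₁ + n₂ = n) (g : (Fin n → Y) → ℝ) :
    ∑ y : Fin n → Y, g y = ∑ y₁ : Fin n₁ → Y, ∑ y₂ : Fin n₂ → Y, g (merge h y₁ y₂) := by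
  rw [← Equiv.sum_comp (mergeEquiv (Y := Y) h) g, Fintype.sum_prod_type]
  rfl

end Scratch

section Main
open scoped Classical
variable {X Y : Type} [Fintype X] [Fintype Y] (W : X → Y → ℝ)
variable {M n L n₁ n₂ L₁ : ℕ}

noncomputable def Efn (h : n₁ + n₂ = n) (c : FBCode X Y M n L) (m : Fin M)
    (y₁ : Fin n₁ → Y) : ℝ :=
  ∑ y₂ : Fin n₂ → Y, P2 W h c m y₁ y₂ * c.dec (merge h y₁ y₂) none

lemma P1_nonneg (hW0 : ∀ x y, 0 ≤ W x y) (h : n₁ + n₂ = n) (c : FBCode X Y M n L)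
    (m : Fin M) (y₁ : Fin n₁ → Y) : 0 ≤ P1 W h c m y₁ :=
  Finset.prod_nonneg fun _ _ => hW0 _ _

lemma P2_nonneg (hW0 : ∀ x y, 0 ≤ W x y) (h : n₁ + n₂ = n) (c : FBCode X Y M n L)
    (m : Fin M) (y₁ : Fin n₁ → Y) (y₂ : Fin n₂ → Y) : 0 ≤ P2 W h c m y₁ y₂ :=
  Finset.prod_nonneg fun _ _ => hW0 _ _

lemma Efn_nonneg (hW0 : ∀ x y, 0 ≤ W x y) (h : n₁ + n₂ = n) (c : FBCode X Y M n L)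
    (m : Fin M) (y₁ : Fin n₁ → Y) : 0 ≤ Efn W h c m y₁ :=
  Finset.sum_nonneg fun y₂ _ => mul_nonneg (P2_nonneg W hW0 h c m y₁ y₂) (c.dec_nonneg _ _)

lemma outProb_nonneg (hW0 : ∀ x y, 0 ≤ W x y) (c : FBCode X Y M n L)
    (m : Fin M) (y : Fin n → Y) : 0 ≤ FBCode.outProb W c m y :=
  Finset.prod_nonneg fun _ _ => hW0 _ _

lemma Pera_nonneg (hW0 : ∀ x y, 0 ≤ W x y) (c : FBCode X Y M n L) :
    0 ≤ FBCode.Pera W c :=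
  mul_nonneg (by positivity) <| Finset.sum_nonneg fun m _ => Finset.sum_nonneg fun y _ =>
    mul_nonneg (outProb_nonneg W hW0 c m y) (c.dec_nonneg _ _)

lemma Perr_nonneg (hW0 : ∀ x y, 0 ≤ W x y) (c : FBCode X Y M n L) :
    0 ≤ FBCode.Perr W c :=
  mul_nonneg (by positivity) <| Finset.sum_nonneg fun m _ => Finset.sum_nonneg fun y _ =>
    mul_nonneg (outProb_nonneg W hW0 c m y) <| Finset.sum_nonneg fun S _ => by
      split_ifs; exact le_refl 0; exact c.dec_nonneg _ _

lemma perr_pointwise (hW0 : ∀ x y, 0 ≤ W x y) (c : FBCode X Y M n L)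
    (hfree : FBCode.Perr W c = 0) :
    ∀ (m : Fin M) (y : Fin n → Y) (S : Finset (Fin M)), m ∉ S →
      FBCode.outProb W c m y * c.dec y (some S) = 0 := by
  intro m y S hmS
  have hM : (0:ℝ) < (M : ℝ) := by exact_mod_cast m.pos
  have hterm : ∀ (m : Fin M) (y : Fin n → Y),
      0 ≤ FBCode.outProb W c m y * ∑ S : Finset (Fin M), if m ∈ S then 0 else c.dec y (some S) :=
    fun m y => mul_nonneg (outProb_nonneg W hW0 c m y) <| Finset.sum_nonneg fun S _ => by
      split_ifs; exact le_refl 0; exact c.dec_nonneg _ _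
  have h1 : ∑ m : Fin M, ∑ y : Fin n → Y, FBCode.outProb W c m y *
      ∑ S : Finset (Fin M), (if m ∈ S then 0 else c.dec y (some S)) = 0 := by
    unfold FBCode.Perr at hfree
    rcases mul_eq_zero.mp hfree with h | h
    · exact absurd h (inv_ne_zero (ne_of_gt hM))
    · exact h
  have h2 := (Finset.sum_eq_zero_iff_of_nonneg
    (fun m _ => Finset.sum_nonneg fun y _ => hterm m y)).mp h1 m (Finset.mem_univ m)
  have h3 := (Finset.sum_eq_zero_iff_of_nonneg (fun y _ => hterm m y)).mp h2 y (Finset.mem_univ y)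
  rcases mul_eq_zero.mp h3 with h | h
  · rw [h, zero_mul]
  · have h4 := (Finset.sum_eq_zero_iff_of_nonneg (fun S _ => by
      split_ifs; exact le_refl 0; exact c.dec_nonneg _ _)).mp h S (Finset.mem_univ S)
    rw [if_neg hmS] at h4
    rw [h4, mul_zero]

noncomputable def subMap (T : Finset (Fin M)) (hT : T.card = L₁ + 1) :
    Option (Finset (Fin M)) → Option (Finset (Fin (L₁+1))) :=
  Option.map (fun S => Finset.univ.filter (fun i => (T.orderIsoOfFin hT i : Fin M) ∈ S))

noncomputable def subCode (h : n₁ + n₂ = n) (c : FBCode X Y M n L) (y₁ : Fin n₁ → Y)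
    (T : Finset (Fin M)) (hT : T.card = L₁ + 1) : FBCode X Y (L₁+1) n₂ L where
  enc i t p := c.enc ((T.orderIsoOfFin hT i : Fin M)) ⟨n₁ + t.1, by have := t.2; omega⟩
    (fun k => if hk : k.1 < n₁ then y₁ ⟨k.1, hk⟩ else p ⟨k.1 - n₁, by have hk2 : k.1 < n₁ + t.1 := k.2; omega⟩)
  dec y₂ o' := ∑ o ∈ Finset.univ.filter (fun o => subMap T hT o = o'), c.dec (merge h y₁ y₂) o
  dec_nonneg := fun y o => Finset.sum_nonneg fun _ _ => c.dec_nonneg _ _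
  dec_sum := fun y => by
    rw [Finset.sum_fiberwise Finset.univ (subMap T hT) (c.dec (merge h y₁ y))]
    exact c.dec_sum _
  dec_size := fun y S' hne => by
    obtain ⟨o, ho, hdo⟩ := Finset.exists_ne_zero_of_sum_ne_zero hne
    have hmo := (Finset.mem_filter.mp ho).2
    match o with
    | none => simp [subMap] at hmo
    | some S =>
      have hS' : S' = Finset.univ.filter (fun i => (T.orderIsoOfFin hT i : Fin M) ∈ S) := by
        simpa [subMap] using hmo.symm
      have hcard : S'.card ≤ S.card := by
        rw [hS']
        apply Finset.card_le_card_of_injOn (fun i => (T.orderIsoOfFin hT i : Fin M))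
        · intro i hi; exact (Finset.mem_filter.mp hi).2
        · intro a _ b _ hab
          exact (T.orderIsoOfFin hT).injective (Subtype.ext hab)
      exact le_trans hcard (c.dec_size _ S hdo)

lemma outProb_subCode (h : n₁ + n₂ = n) (c : FBCode X Y M n L) (y₁ : Fin n₁ → Y)
    (T : Finset (Fin M)) (hT : T.card = L₁ + 1) (i : Fin (L₁+1)) (y₂ : Fin n₂ → Y) :
    FBCode.outProb W (subCode h c y₁ T hT) i y₂ = P2 W h c (T.orderIsoOfFin hT i : Fin M) y₁ y₂ := by
  unfold FBCode.outProb P2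
  refine Finset.prod_congr rfl fun t _ => ?_
  rfl

lemma dec_subCode_none (h : n₁ + n₂ = n) (c : FBCode X Y M n L) (y₁ : Fin n₁ → Y)
    (T : Finset (Fin M)) (hT : T.card = L₁ + 1) (y₂ : Fin n₂ → Y) :
    (subCode h c y₁ T hT).dec y₂ none = c.dec (merge h y₁ y₂) none := by
  show ∑ o ∈ Finset.univ.filter (fun o => subMap T hT o = none), c.dec (merge h y₁ y₂) o
      = c.dec (merge h y₁ y₂) none
  have : Finset.univ.filter (fun o => subMap T hT o = none) = {none} := by
    ext o; simp [subMap]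
  rw [this, Finset.sum_singleton]

lemma perr_subCode (hW0 : ∀ x y, 0 ≤ W x y) (h : n₁ + n₂ = n) (c : FBCode X Y M n L)
    (hfree : FBCode.Perr W c = 0) (y₁ : Fin n₁ → Y)
    (T : Finset (Fin M)) (hT : T.card = L₁ + 1)
    (hP1 : ∀ m ∈ T, P1 W h c m y₁ ≠ 0) :
    FBCode.Perr W (subCode h c y₁ T hT) = 0 := by
  unfold FBCode.Perr
  rw [mul_eq_zero]
  right
  apply Finset.sum_eq_zero; intro i _
  apply Finset.sum_eq_zero; intro y₂ _
  rw [outProb_subCode, Finset.mul_sum]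
  apply Finset.sum_eq_zero; intro S' _
  by_cases hi : i ∈ S'
  · rw [if_pos hi, mul_zero]
  · rw [if_neg hi]
    show P2 W h c _ y₁ y₂ *
      (∑ o ∈ Finset.univ.filter (fun o => subMap T hT o = some S'), c.dec (merge h y₁ y₂) o) = 0
    rw [Finset.mul_sum]
    apply Finset.sum_eq_zero; intro o ho
    have hmo := (Finset.mem_filter.mp ho).2
    match o with
    | none => simp [subMap] at hmo
    | some S =>
      have hS' : S' = Finset.univ.filter (fun j => (T.orderIsoOfFin hT j : Fin M) ∈ S) := by
        simpa [subMap] using hmo.symm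
      have hnot : (T.orderIsoOfFin hT i : Fin M) ∉ S := by
        intro hmem
        exact hi (hS' ▸ Finset.mem_filter.mpr ⟨Finset.mem_univ i, hmem⟩)
      have h0 := perr_pointwise W hW0 c hfree _ (merge h y₁ y₂) S hnot
      rw [outProb_merge W h] at h0
      rcases mul_eq_zero.mp h0 with h1 | h1
      · rcases mul_eq_zero.mp h1 with h2 | h2
        · exact absurd h2 (hP1 _ (T.orderIsoOfFin hT i).2)
        · rw [h2, zero_mul]
      · rw [h1, mul_zero]

lemma pera_subCode (h : n₁ + n₂ = n) (c : FBCode X Y M n L) (y₁ : Fin n₁ → Y)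
    (T : Finset (Fin M)) (hT : T.card = L₁ + 1) :
    FBCode.Pera W (subCode h c y₁ T hT)
      = ((L₁+1 : ℕ) : ℝ)⁻¹ * ∑ i : Fin (L₁+1), Efn W h c (T.orderIsoOfFin hT i : Fin M) y₁ := by
  unfold FBCode.Pera Efn
  congr 1
  refine Finset.sum_congr rfl fun i _ => Finset.sum_congr rfl fun y₂ _ => ?_
  rw [outProb_subCode, dec_subCode_none]

noncomputable def badSet (h : n₁ + n₂ = n) (c : FBCode X Y M n L) (r : ℝ)
    (y₁ : Fin n₁ → Y) : Finset (Fin M) :=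
  Finset.univ.filter (fun m => P1 W h c m y₁ ≠ 0 ∧ Efn W h c m y₁ < r)

lemma badSet_card (hW0 : ∀ x y, 0 ≤ W x y) (h : n₁ + n₂ = n) (c : FBCode X Y M n L)
    (hfree : FBCode.Perr W c = 0) (y₁ : Fin n₁ → Y) :
    (badSet W h c (PeraMin (X := X) (Y := Y) W (L₁+1) n₂ L) y₁).card ≤ L₁ := by
  set r := PeraMin (X := X) (Y := Y) W (L₁+1) n₂ L with hr
  by_contra hgt
  push_neg at hgt
  obtain ⟨T, hTsub, hTcard⟩ :=
    Finset.exists_subset_card_eq (s := badSet W h c r y₁) (n := L₁+1) (by omega)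
  have hP1 : ∀ m ∈ T, P1 W h c m y₁ ≠ 0 :=
    fun m hm => ((Finset.mem_filter.mp (hTsub hm)).2).1
  have hE : ∀ m ∈ T, Efn W h c m y₁ < r :=
    fun m hm => ((Finset.mem_filter.mp (hTsub hm)).2).2
  set sub := subCode h c y₁ T hTcard with hsub
  have hfree' : FBCode.Perr W sub = 0 := perr_subCode W hW0 h c hfree y₁ T hTcard hP1
  have hge : r ≤ FBCode.Pera W sub := by
    apply csInf_le
    · exact ⟨0, fun x ⟨c', _, hc'⟩ => hc' ▸ Pera_nonneg W hW0 c'⟩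
    · exact ⟨sub, hfree', rfl⟩
  have hlt : FBCode.Pera W sub < r := by
    rw [hsub, pera_subCode]
    have hsum : ∑ i : Fin (L₁+1), Efn W h c (T.orderIsoOfFin hTcard i : Fin M) y₁
        < ((L₁+1 : ℕ) : ℝ) * r := by
      calc ∑ i : Fin (L₁+1), Efn W h c (T.orderIsoOfFin hTcard i : Fin M) y₁
          < ∑ _i : Fin (L₁+1), r := by
            apply Finset.sum_lt_sum_of_nonempty Finset.univ_nonempty
            intro i _
            exact hE _ (T.orderIsoOfFin hTcard i).2
        _ = ((L₁+1 : ℕ) : ℝ) * r := by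
            rw [Finset.sum_const, Finset.card_univ, Fintype.card_fin, nsmul_eq_mul]
    have hpos : (0:ℝ) < ((L₁+1 : ℕ) : ℝ) := by positivity
    calc ((L₁+1 : ℕ) : ℝ)⁻¹ * ∑ i : Fin (L₁+1), Efn W h c (T.orderIsoOfFin hTcard i : Fin M) y₁
        < ((L₁+1 : ℕ) : ℝ)⁻¹ * (((L₁+1 : ℕ) : ℝ) * r) := by
          exact mul_lt_mul_of_pos_left hsum (by positivity)
      _ = r := by field_simp
  exact absurd hge (not_le.mpr hlt)

noncomputable def prefixCode (h : n₁ + n₂ = n) (c : FBCode X Y M n L) (r : ℝ)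
    (hcard : ∀ y₁, (badSet W h c r y₁).card ≤ L₁) : FBCode X Y M n₁ L₁ where
  enc m t p := c.enc m ⟨t.1, by have := t.2; omega⟩ p
  dec y₁ o := if o = some (badSet W h c r y₁) then 1 else 0
  dec_nonneg := by intro y o; split_ifs <;> norm_num
  dec_sum := by intro y; simp
  dec_size := by
    intro y S hne
    by_cases hS : S = badSet W h c r y
    · rw [hS]; exact hcard y
    · exact absurd (if_neg (fun hc => hS (Option.some_injective _ hc))) hne

lemma outProb_prefixCode (h : n₁ + n₂ = n) (c : FBCode X Y M n L) (r : ℝ)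
    (hcard : ∀ y₁, (badSet W h c r y₁).card ≤ L₁) (m : Fin M) (y₁ : Fin n₁ → Y) :
    FBCode.outProb W (prefixCode W h c r hcard) m y₁ = P1 W h c m y₁ := rfl

lemma pera_prefixCode (h : n₁ + n₂ = n) (c : FBCode X Y M n L) (r : ℝ)
    (hcard : ∀ y₁, (badSet W h c r y₁).card ≤ L₁) :
    FBCode.Pera W (prefixCode W h c r hcard) = 0 := by
  unfold FBCode.Pera
  rw [mul_eq_zero]; right
  apply Finset.sum_eq_zero; intro m _
  apply Finset.sum_eq_zero; intro y₁ _
  show FBCode.outProb W _ m y₁ * (if (none : Option (Finset (Fin M))) = some (badSet W h c r y₁) then 1 else 0) = 0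
  rw [if_neg (by simp), mul_zero]

lemma perr_prefixCode (h : n₁ + n₂ = n) (c : FBCode X Y M n L) (r : ℝ)
    (hcard : ∀ y₁, (badSet W h c r y₁).card ≤ L₁) :
    FBCode.Perr W (prefixCode W h c r hcard)
      = (M : ℝ)⁻¹ * ∑ m : Fin M, ∑ y₁ : Fin n₁ → Y,
          P1 W h c m y₁ * (if m ∈ badSet W h c r y₁ then 0 else 1) := by
  unfold FBCode.Perr
  congr 1
  refine Finset.sum_congr rfl fun m _ => Finset.sum_congr rfl fun y₁ _ => ?_
  rw [outProb_prefixCode]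
  congr 1
  have : ∀ S : Finset (Fin M),
      (prefixCode W h c r hcard).dec y₁ (some S) = if S = badSet W h c r y₁ then 1 else 0 := by
    intro S
    show (if some S = some (badSet W h c r y₁) then (1:ℝ) else 0) = _
    simp
  rw [Finset.sum_eq_single (badSet W h c r y₁)]
  · rw [this]
    by_cases hm : m ∈ badSet W h c r y₁ <;> simp [hm]
  · intro b _ hb
    rw [this]
    split_ifs with h1 h2 <;> simp_all
  · intro habs; exact absurd (Finset.mem_univ _) habs

lemma key_bound (hW0 : ∀ x y, 0 ≤ W x y) (h : n₁ + n₂ = n) (c : FBCode X Y M n L)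
    (hfree : FBCode.Perr W c = 0) :
    PeMin (X := X) (Y := Y) W M n₁ L₁ 0 * PeraMin (X := X) (Y := Y) W (L₁+1) n₂ L
      ≤ FBCode.Pera W c := by
  set r := PeraMin (X := X) (Y := Y) W (L₁+1) n₂ L with hrdef
  have hr0 : 0 ≤ r := Real.sInf_nonneg fun x ⟨c', _, hc'⟩ => hc' ▸ Pera_nonneg W hW0 c'
  have hcard : ∀ y₁, (badSet W h c r y₁).card ≤ L₁ := fun y₁ => badSet_card W hW0 h c hfree y₁
  set c₁ := prefixCode W h c r hcard with hc₁
  have h1 : PeMin (X := X) (Y := Y) W M n₁ L₁ 0 ≤ FBCode.Perr W c₁ := by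
    refine csInf_le ⟨0, ?_⟩ ⟨c₁, le_of_eq (pera_prefixCode W h c r hcard), rfl⟩
    rintro x ⟨c', -, hc'⟩
    exact hc' ▸ Perr_nonneg W hW0 c'
  have hPera : FBCode.Pera W c
      = (M : ℝ)⁻¹ * ∑ m : Fin M, ∑ y₁ : Fin n₁ → Y, P1 W h c m y₁ * Efn W h c m y₁ := by
    unfold FBCode.Pera
    congr 1
    refine Finset.sum_congr rfl fun m _ => ?_
    rw [sum_merge h (fun y => FBCode.outProb W c m y * c.dec y none)]
    refine Finset.sum_congr rfl fun y₁ _ => ?_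
    unfold Efn
    rw [Finset.mul_sum]
    refine Finset.sum_congr rfl fun y₂ _ => ?_
    rw [outProb_merge W h, mul_assoc]
  have h2 : FBCode.Perr W c₁ * r ≤ FBCode.Pera W c := by
    rw [hc₁, perr_prefixCode, hPera, mul_assoc]
    apply mul_le_mul_of_nonneg_left _ (by positivity : (0:ℝ) ≤ (M:ℝ)⁻¹)
    rw [Finset.sum_mul]
    apply Finset.sum_le_sum; intro m _
    rw [Finset.sum_mul]
    apply Finset.sum_le_sum; intro y₁ _
    by_cases hm : m ∈ badSet W h c r y₁
    · rw [if_pos hm, mul_zero, zero_mul]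
      exact mul_nonneg (P1_nonneg W hW0 h c m y₁) (Efn_nonneg W hW0 h c m y₁)
    · rw [if_neg hm, mul_one]
      by_cases hP1 : P1 W h c m y₁ = 0
      · rw [hP1, zero_mul, zero_mul]
      · have hrE : r ≤ Efn W h c m y₁ := by
          by_contra hlt
          push_neg at hlt
          exact hm (Finset.mem_filter.mpr ⟨Finset.mem_univ m, hP1, hlt⟩)
        exact mul_le_mul_of_nonneg_left hrE (P1_nonneg W hW0 h c m y₁)
  calc PeMin (X := X) (Y := Y) W M n₁ L₁ 0 * r
      ≤ FBCode.Perr W c₁ * r := mul_le_mul_of_nonneg_right h1 hr0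
    _ ≤ FBCode.Pera W c := h2

noncomputable def concatCode (h : n₁ + n₂ = n) (c₁ : FBCode X Y M n₁ L₁)
    (c₂ : FBCode X Y (L₁+1) n₂ L) : FBCode X Y M n L where
  enc m t p := if ht : t.1 < n₁ then c₁.enc m ⟨t.1, ht⟩ p
    else c₂.enc ⟨0, Nat.succ_pos L₁⟩ ⟨t.1 - n₁, by have := t.2; omega⟩
      (fun i => p ⟨i.1, by have hi : i.1 < t.1 - n₁ := i.2; omega⟩)
  dec y o := if o = none then 1 else 0
  dec_nonneg := by intro y o; split_ifs <;> norm_num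
  dec_sum := by intro y; simp
  dec_size := by intro y S hne; exact absurd (if_neg (by simp)) hne

lemma perr_concatCode (h : n₁ + n₂ = n) (c₁ : FBCode X Y M n₁ L₁)
    (c₂ : FBCode X Y (L₁+1) n₂ L) : FBCode.Perr W (concatCode h c₁ c₂) = 0 := by
  unfold FBCode.Perr
  rw [mul_eq_zero]; right
  apply Finset.sum_eq_zero; intro m _
  apply Finset.sum_eq_zero; intro y _
  have : ∀ S : Finset (Fin M),
      (if m ∈ S then (0:ℝ) else (concatCode h c₁ c₂).dec y (some S)) = 0 := by
    intro S
    show (if m ∈ S then (0:ℝ) else if (some S : Option (Finset (Fin M))) = none then 1 else 0) = 0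
    split_ifs <;> simp_all
  rw [Finset.sum_congr rfl (fun S _ => this S), Finset.sum_const, smul_zero, mul_zero]

end Main


/-- product lower bound on the minimum erasure probability of
error-free feedback codes:
`P_era(M,n,L) ≥ P_e(M,n₁,L₁,0) · P_era(L₁+1, n−n₁, L)`. -/
theorem PeraMin_product_bound {X Y : Type} [Fintype X] [Fintype Y]
    (W : X → Y → ℝ) (hW0 : ∀ x y, 0 ≤ W x y) (hW1 : ∀ x, ∑ y, W x y = 1)
    (n M L : ℕ) (n₁ : ℕ) (hn₁ : n₁ ≤ n) (L₁ : ℕ) :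
    PeMin (X := X) (Y := Y) W M n₁ L₁ 0 *
        PeraMin (X := X) (Y := Y) W (L₁ + 1) (n - n₁) L
      ≤ PeraMin (X := X) (Y := Y) W M n L := by

  have h : n₁ + (n - n₁) = n := by omega
  by_cases hne : {r | ∃ c : FBCode X Y M n L,
      FBCode.Perr W c = 0 ∧ FBCode.Pera W c = r}.Nonempty
  · apply le_csInf hne
    rintro ρ ⟨c, hc0, rfl⟩
    exact key_bound W hW0 h c hc0
  · have hzero : PeraMin (X := X) (Y := Y) W M n L = 0 := by
      unfold PeraMin
      rw [Set.not_nonempty_iff_eq_empty.mp hne, Real.sInf_empty]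
    rw [hzero]
    by_cases hB : {e | ∃ c : FBCode X Y M n₁ L₁,
        FBCode.Pera W c ≤ 0 ∧ FBCode.Perr W c = e}.Nonempty
    · by_cases hR : {r | ∃ c : FBCode X Y (L₁+1) (n - n₁) L,
          FBCode.Perr W c = 0 ∧ FBCode.Pera W c = r}.Nonempty
      · exfalso
        obtain ⟨e, c₁, _, _⟩ := hB
        obtain ⟨r, c₂, _, _⟩ := hR
        exact hne ⟨FBCode.Pera W (concatCode h c₁ c₂),
          concatCode h c₁ c₂, perr_concatCode W h c₁ c₂, rfl⟩
      · have : PeraMin (X := X) (Y := Y) W (L₁+1) (n - n₁) L = 0 := by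
          unfold PeraMin
          rw [Set.not_nonempty_iff_eq_empty.mp hR, Real.sInf_empty]
        rw [this, mul_zero]
    · have : PeMin (X := X) (Y := Y) W M n₁ L₁ 0 = 0 := by
        unfold PeMin
        rw [Set.not_nonempty_iff_eq_empty.mp hB, Real.sInf_empty]
      rw [this, zero_mul]
end

section
/- For any DMC W with finite input alphabet X and finite output alphabet Y, and any s ∈ (0, 1/2), define β(s) = min over input pairs (x, x̃) of ∑_y W(y|x)^{1−s} W(y|x̃)^{s}. Then for any length-n error-free feedback code with two equiprobable messages, the erasure probability satisfies P_era ≥ (1/2)·β(s)^n. Consequently P_era(2, n, 1) ≥ (1/2)·(sup_{s∈(0,1/2)} β(s))^n. -/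
open scoped BigOperators

section Aux

variable {Y : Type} [Fintype Y]

omit [Fintype Y] in
lemma prefix_cons {n : ℕ} (a : Y) (z : Fin n → Y) (t : Fin n) :
    (fun i : Fin (t.succ.1) => Fin.cons (α := fun _ => Y) a z ⟨i.1, lt_trans i.2 t.succ.2⟩)
      = Fin.cons (α := fun _ => Y) a (fun i : Fin t.1 => z ⟨i.1, lt_trans i.2 t.2⟩) := by
  funext i
  match i with
  | ⟨0, h⟩ => rfl
  | ⟨j+1, h⟩ =>
    show Fin.cons (α := fun _ => Y) a z (Fin.succ ⟨j, Nat.lt_of_succ_lt_succ (lt_trans h t.succ.2)⟩) = _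
    rw [Fin.cons_succ]
    show _ = Fin.cons (α := fun _ => Y) a _ (Fin.succ ⟨j, Nat.lt_of_succ_lt_succ (by simpa using h)⟩)
    rw [Fin.cons_succ]

lemma chain_sum_ge (β : ℝ) (hβ : 0 ≤ β) :
    ∀ (n : ℕ) (g : (t : Fin n) → (Fin t.1 → Y) → Y → ℝ),
      (∀ t p y, 0 ≤ g t p y) → (∀ t p, β ≤ ∑ y, g t p y) →
      β ^ n ≤ ∑ y : Fin n → Y, ∏ t : Fin n, g t (fun i => y ⟨i.1, lt_trans i.2 t.2⟩) (y t) := by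
  intro n
  induction n with
  | zero => intro g hg hgs; simp
  | succ n ih =>
    intro g hg hgs
    rw [← Equiv.sum_comp (Fin.consEquiv (fun _ : Fin (n+1) => Y)), Fintype.sum_prod_type]
    have key : ∀ a : Y,
        β ^ n ≤ ∑ z : Fin n → Y, ∏ t : Fin n,
          g t.succ (Fin.cons a (fun i : Fin t.1 => z ⟨i.1, lt_trans i.2 t.2⟩)) (z t) := by
      intro a
      exact ih (fun t p y => g t.succ (Fin.cons a p) y) (fun t p y => hg _ _ _)
        (fun t p => hgs _ _)
    calc β ^ (n+1) = β * β ^ n := by ring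
    _ ≤ (∑ a : Y, g 0 (fun i => absurd i.2 (Nat.not_lt_zero _)) a) * β ^ n := by
        apply mul_le_mul_of_nonneg_right (hgs _ _) (pow_nonneg hβ n)
    _ = ∑ a : Y, g 0 (fun i => absurd i.2 (Nat.not_lt_zero _)) a * β ^ n := by
        rw [Finset.sum_mul]
    _ ≤ _ := by
        apply Finset.sum_le_sum
        intro a _
        have h1 : ∀ z : Fin n → Y,
            ∏ t : Fin (n+1), g t (fun i => (Fin.consEquiv (fun _ : Fin (n+1) => Y)) (a, z)
                ⟨i.1, lt_trans i.2 t.2⟩) ((Fin.consEquiv (fun _ : Fin (n+1) => Y)) (a, z) t)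
            = g 0 (fun i => absurd i.2 (Nat.not_lt_zero _)) a *
              ∏ t : Fin n, g t.succ (Fin.cons a (fun i : Fin t.1 => z ⟨i.1, lt_trans i.2 t.2⟩)) (z t) := by
          intro z
          have hc : (Fin.consEquiv (fun _ : Fin (n+1) => Y)) (a, z) = Fin.cons a z := rfl
          rw [hc, Fin.prod_univ_succ]
          congr 1
          · congr 1
            funext i
            exact absurd i.2 (by simp)
          · apply Finset.prod_congr rfl
            intro t _
            rw [Fin.cons_succ]
            congr 1
            exact prefix_cons a z t
        rw [Finset.sum_congr rfl (fun z _ => h1 z), ← Finset.mul_sum]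
        exact mul_le_mul_of_nonneg_left (key a) (hg _ _ _)

/-- pointwise bound `a^(1-s) b^s ≤ a + b` for positive `a b` and `s ∈ (0,1)`. -/
lemma rpow_mix_le_add {a b s : ℝ} (ha : 0 < a) (hb : 0 < b) (hs0 : 0 ≤ s) (hs1 : s ≤ 1) :
    a ^ (1 - s) * b ^ s ≤ a + b := by
  have hmax : 0 < max a b := lt_max_of_lt_left ha
  have h1 : a ^ (1 - s) ≤ (max a b) ^ (1 - s) :=
    Real.rpow_le_rpow ha.le (le_max_left a b) (by linarith)
  have h2 : b ^ s ≤ (max a b) ^ s :=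
    Real.rpow_le_rpow hb.le (le_max_right a b) hs0
  calc a ^ (1 - s) * b ^ s ≤ (max a b) ^ (1 - s) * (max a b) ^ s :=
        mul_le_mul h1 h2 (Real.rpow_nonneg hb.le s) (Real.rpow_nonneg hmax.le _)
    _ = (max a b) ^ ((1 - s) + s) := (Real.rpow_add hmax _ _).symm
    _ = max a b := by norm_num
    _ ≤ a + b := max_le (le_add_of_nonneg_right hb.le) (le_add_of_nonneg_left ha.le)

end Aux

/-- for every `s ∈ (0,1/2)`, every length-`n` error-free feedback
code with two equiprobable messages has erasure probability at least
`(1/2)·β(s)^n`, where `β(s) = min_{x,x̃} ∑_y W(y|x)^{1−s} W(y|x̃)^s`;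
consequently `P_era(2,n,1) ≥ (1/2)·(sup_{s∈(0,1/2)} β(s))^n`. -/
theorem pera_ge_half_beta_pow {X Y : Type} [Fintype X] [Fintype Y] [Nonempty X]
    (W : X → Y → ℝ) (hW0 : ∀ x y, 0 ≤ W x y) (hW1 : ∀ x, ∑ y, W x y = 1) (n : ℕ) :
    (∀ s ∈ Set.Ioo (0 : ℝ) (1 / 2), ∀ c : FBCode X Y 2 n 1, FBCode.Perr W c = 0 →
      (1 / 2) * (⨅ p : X × X, ∑ y, W p.1 y ^ (1 - s) * W p.2 y ^ s) ^ n
        ≤ FBCode.Pera W c) ∧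
    (1 / 2) * (⨆ s : Set.Ioo (0 : ℝ) (1 / 2),
        ⨅ p : X × X, ∑ y, W p.1 y ^ (1 - (s : ℝ)) * W p.2 y ^ (s : ℝ)) ^ n
      ≤ PeraMin (X := X) (Y := Y) W 2 n 1 := by
  -- basic facts about β(s)
  set B : ℝ → ℝ := fun s => ⨅ p : X × X, ∑ y, W p.1 y ^ (1 - s) * W p.2 y ^ s with hB
  have hBdd : ∀ s : ℝ, BddBelow (Set.range fun p : X × X => ∑ y, W p.1 y ^ (1 - s) * W p.2 y ^ s) :=
    fun s => (Set.finite_range _).bddBelow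
  have hB0 : ∀ s : ℝ, 0 ≤ B s := fun s =>
    le_ciInf fun p => Finset.sum_nonneg fun y _ =>
      mul_nonneg (Real.rpow_nonneg (hW0 _ _) _) (Real.rpow_nonneg (hW0 _ _) _)
  have hBle : ∀ s : ℝ, ∀ x x' : X, B s ≤ ∑ y, W x y ^ (1 - s) * W x' y ^ s :=
    fun s x x' => ciInf_le (hBdd s) (x, x')
  have hB1 : ∀ s : ℝ, B s ≤ 1 := by
    intro s
    obtain ⟨x⟩ := ‹Nonempty X›
    refine (hBle s x x).trans ?_
    have : ∀ y : Y, W x y ^ (1 - s) * W x y ^ s = W x y := by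
      intro y
      rw [← Real.rpow_add' (hW0 x y) (by norm_num)]
      norm_num
    rw [Finset.sum_congr rfl fun y _ => this y, hW1 x]
  -- Part 1
  have part1 : ∀ s ∈ Set.Ioo (0 : ℝ) (1 / 2), ∀ c : FBCode X Y 2 n 1, FBCode.Perr W c = 0 →
      (1 / 2) * (⨅ p : X × X, ∑ y, W p.1 y ^ (1 - s) * W p.2 y ^ s) ^ n
        ≤ FBCode.Pera W c := by
    rintro s ⟨hs0, hs2⟩ c hPerr
    have hout : ∀ m y, 0 ≤ FBCode.outProb W c m y :=
      fun m y => Finset.prod_nonneg fun t _ => hW0 _ _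
    -- from zero error probability: each term vanishes
    have hterm : ∀ m y, FBCode.outProb W c m y *
        (∑ S : Finset (Fin 2), if m ∈ S then 0 else c.dec y (some S)) = 0 := by
      have hsum : ∑ m : Fin 2, ∑ y : Fin n → Y, FBCode.outProb W c m y *
          (∑ S : Finset (Fin 2), if m ∈ S then 0 else c.dec y (some S)) = 0 := by
        have := hPerr
        unfold FBCode.Perr at this
        have h2 : ((2 : ℕ) : ℝ)⁻¹ ≠ 0 := by norm_num
        exact (mul_eq_zero.mp this).resolve_left h2
      have hnn : ∀ m : Fin 2, ∀ y : Fin n → Y, 0 ≤ FBCode.outProb W c m y *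
          (∑ S : Finset (Fin 2), if m ∈ S then 0 else c.dec y (some S)) := by
        intro m y
        refine mul_nonneg (hout m y) (Finset.sum_nonneg fun S _ => ?_)
        split <;> [rfl; exact c.dec_nonneg y (some S)]
      intro m y
      have h1 := (Finset.sum_eq_zero_iff_of_nonneg
        (fun m _ => Finset.sum_nonneg fun y _ => hnn m y)).mp hsum m (Finset.mem_univ m)
      exact (Finset.sum_eq_zero_iff_of_nonneg (fun y _ => hnn m y)).mp h1 y (Finset.mem_univ y)
    -- on doubly-positive outputs, the decoder must erase
    have hdec1 : ∀ y : Fin n → Y, FBCode.outProb W c 0 y ≠ 0 → FBCode.outProb W c 1 y ≠ 0 →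
        c.dec y none = 1 := by
      intro y h0 h1
      have hdec0 : ∀ S : Finset (Fin 2), c.dec y (some S) = 0 := by
        intro S
        by_contra hS
        have hcard := c.dec_size y S hS
        have hmem : ∀ m : Fin 2, m ∈ S := by
          intro m
          have hm : FBCode.outProb W c m y ≠ 0 := by fin_cases m <;> assumption
          have hz : (∑ S' : Finset (Fin 2), if m ∈ S' then 0 else c.dec y (some S')) = 0 :=
            (mul_eq_zero.mp (hterm m y)).resolve_left hm
          have := (Finset.sum_eq_zero_iff_of_nonneg (fun S' _ => by
            split <;> [rfl; exact c.dec_nonneg y (some S')])).mp hz S (Finset.mem_univ S)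
          by_contra hmS
          rw [if_neg hmS] at this
          exact hS this
        have hsub : ({0, 1} : Finset (Fin 2)) ⊆ S := by
          intro x hx
          simp only [Finset.mem_insert, Finset.mem_singleton] at hx
          rcases hx with rfl | rfl <;> exact hmem _
        have := Finset.card_le_card hsub
        have hc2 : ({0, 1} : Finset (Fin 2)).card = 2 := by decide
        omega
      have := c.dec_sum y
      rw [Fintype.sum_option] at this
      rw [Finset.sum_congr rfl fun S _ => hdec0 S] at this
      simpa using this
    -- pointwise bound
    have hpw : ∀ y : Fin n → Y,
        FBCode.outProb W c 0 y ^ (1 - s) * FBCode.outProb W c 1 y ^ s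
          ≤ (FBCode.outProb W c 0 y + FBCode.outProb W c 1 y) * c.dec y none := by
      intro y
      by_cases h0 : FBCode.outProb W c 0 y = 0
      · rw [h0, Real.zero_rpow (by linarith), zero_mul]
        exact mul_nonneg (add_nonneg le_rfl (hout 1 y)) (c.dec_nonneg y none)
      by_cases h1 : FBCode.outProb W c 1 y = 0
      · rw [h1, Real.zero_rpow (ne_of_gt hs0), mul_zero]
        exact mul_nonneg (add_nonneg (hout 0 y) le_rfl) (c.dec_nonneg y none)
      rw [hdec1 y h0 h1, mul_one]
      exact rpow_mix_le_add (lt_of_le_of_ne (hout 0 y) (Ne.symm h0))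
        (lt_of_le_of_ne (hout 1 y) (Ne.symm h1)) hs0.le (by linarith)
    -- chain bound
    have hchain : B s ^ n ≤ ∑ y : Fin n → Y,
        FBCode.outProb W c 0 y ^ (1 - s) * FBCode.outProb W c 1 y ^ s := by
      have hrw : ∀ y : Fin n → Y,
          FBCode.outProb W c 0 y ^ (1 - s) * FBCode.outProb W c 1 y ^ s
            = ∏ t : Fin n, (W (c.enc 0 t (fun i => y ⟨i.1, lt_trans i.2 t.2⟩)) (y t) ^ (1 - s) *
                W (c.enc 1 t (fun i => y ⟨i.1, lt_trans i.2 t.2⟩)) (y t) ^ s) := by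
        intro y
        unfold FBCode.outProb
        rw [← Real.finset_prod_rpow _ _ (fun t _ => hW0 _ _),
            ← Real.finset_prod_rpow _ _ (fun t _ => hW0 _ _), ← Finset.prod_mul_distrib]
      rw [Finset.sum_congr rfl fun y _ => hrw y]
      exact chain_sum_ge (B s) (hB0 s) n
        (fun t p y' => W (c.enc 0 t p) y' ^ (1 - s) * W (c.enc 1 t p) y' ^ s)
        (fun t p y' => mul_nonneg (Real.rpow_nonneg (hW0 _ _) _) (Real.rpow_nonneg (hW0 _ _) _))
        (fun t p => hBle s _ _)
    -- finish
    have hPera : FBCode.Pera W c = (2 : ℝ)⁻¹ * ∑ y : Fin n → Y,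
        (FBCode.outProb W c 0 y + FBCode.outProb W c 1 y) * c.dec y none := by
      unfold FBCode.Pera
      rw [Fin.sum_univ_two, ← Finset.sum_add_distrib]
      have h : ∀ y : Fin n → Y, FBCode.outProb W c 0 y * c.dec y none
          + FBCode.outProb W c 1 y * c.dec y none
          = (FBCode.outProb W c 0 y + FBCode.outProb W c 1 y) * c.dec y none :=
        fun y => (add_mul _ _ _).symm
      rw [Finset.sum_congr rfl fun y _ => h y]
      norm_num
    rw [hPera]
    have : B s ^ n ≤ ∑ y : Fin n → Y,
        (FBCode.outProb W c 0 y + FBCode.outProb W c 1 y) * c.dec y none :=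
      hchain.trans (Finset.sum_le_sum fun y _ => hpw y)
    calc (1 / 2 : ℝ) * B s ^ n ≤ (1 / 2) * ∑ y : Fin n → Y,
          (FBCode.outProb W c 0 y + FBCode.outProb W c 1 y) * c.dec y none :=
        mul_le_mul_of_nonneg_left this (by norm_num)
      _ = _ := by norm_num
  refine ⟨part1, ?_⟩
  -- Part 2
  have hne : Nonempty (Set.Ioo (0 : ℝ) (1 / 2)) := ⟨⟨1/4, by norm_num, by norm_num⟩⟩
  have hbddA : BddAbove (Set.range fun s : Set.Ioo (0 : ℝ) (1 / 2) => B (s : ℝ)) := by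
    refine ⟨1, ?_⟩
    rintro _ ⟨s, rfl⟩
    exact hB1 _
  have hsup0 : 0 ≤ ⨆ s : Set.Ioo (0 : ℝ) (1 / 2), B (s : ℝ) := by
    obtain ⟨s0⟩ := hne
    exact (hB0 _).trans (le_ciSup hbddA s0)
  set f : ℝ → ℝ := fun x => (1 / 2) * (max x 0) ^ n with hf
  have hmono : Monotone f := fun a b hab =>
    mul_le_mul_of_nonneg_left
      (pow_le_pow_left₀ (le_max_right a 0) (max_le_max hab le_rfl) n) (by norm_num)
  have hcont : ContinuousAt f (⨆ s : Set.Ioo (0 : ℝ) (1 / 2), B (s : ℝ)) := by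
    apply Continuous.continuousAt
    fun_prop
  have hmap := hmono.map_ciSup_of_continuousAt hcont hbddA
  -- the target set is nonempty
  have hCne : {r | ∃ c : FBCode X Y 2 n 1, FBCode.Perr W c = 0 ∧ FBCode.Pera W c = r}.Nonempty := by
    refine ⟨_, ⟨⟨fun _ _ _ => Classical.arbitrary X, fun _ o => if o = none then 1 else 0,
      fun y o => by split <;> norm_num,
      fun y => by simp [Fintype.sum_option],
      fun y S h => by simp at h⟩, ?_, rfl⟩⟩
    unfold FBCode.Perr
    simp
  rw [PeraMin]
  apply le_csInf hCne
  rintro e ⟨c, hc0, rfl⟩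
  have key : ∀ s : Set.Ioo (0 : ℝ) (1 / 2), f (B (s : ℝ)) ≤ FBCode.Pera W c := by
    intro s
    have h1 := part1 (s : ℝ) s.2 c hc0
    have : f (B (s : ℝ)) = (1 / 2) * B (s : ℝ) ^ n := by
      rw [hf]; simp only [max_eq_left (hB0 (s : ℝ))]
    rw [this]
    exact h1
  have : f (⨆ s : Set.Ioo (0 : ℝ) (1 / 2), B (s : ℝ)) ≤ FBCode.Pera W c := by
    rw [hmap]
    exact ciSup_le key
  rw [hf] at this
  simpa [max_eq_left hsup0] using this
end

section
/- For any DMC W and any length-n error-free feedback code with two equiprobable messages, the erasure probability satisfies P_era ≥ (1/2) · (min_{x,x̃} ∑_y √(W(y|x) W(y|x̃)))^n, i.e., the erasure probability is lower bounded by half the n-th power of the minimum Bhattacharyya coefficient over input pairs. -/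
open scoped BigOperators

private lemma sqrt_finset_prod {ι : Type*} (s : Finset ι) (f : ι → ℝ)
    (hf : ∀ i ∈ s, 0 ≤ f i) :
    Real.sqrt (∏ i ∈ s, f i) = ∏ i ∈ s, Real.sqrt (f i) := by
  classical
  induction s using Finset.induction with
  | empty => simp
  | @insert a s hni ih =>
    rw [Finset.prod_insert hni, Finset.prod_insert hni,
      Real.sqrt_mul (hf a (Finset.mem_insert_self a s)),
      ih (fun i hi => hf i (Finset.mem_insert_of_mem hi))]

private lemma bhat_lower {X Y : Type} [Fintype X] [Fintype Y] [Nonempty X]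
    (W : X → Y → ℝ) (hW0 : ∀ x y, 0 ≤ W x y) :
    ∀ (n : ℕ) (f g : (t : Fin n) → (Fin t.1 → Y) → X),
    (⨅ p : X × X, ∑ y, Real.sqrt (W p.1 y * W p.2 y)) ^ n
      ≤ ∑ y : Fin n → Y, ∏ t : Fin n,
          Real.sqrt (W (f t (fun i => y ⟨i.1, lt_trans i.2 t.2⟩)) (y t)
            * W (g t (fun i => y ⟨i.1, lt_trans i.2 t.2⟩)) (y t)) := by
  classical
  set β := (⨅ p : X × X, ∑ y, Real.sqrt (W p.1 y * W p.2 y)) with hβ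
  have hβ0 : 0 ≤ β :=
    Real.iInf_nonneg fun p => Finset.sum_nonneg fun y _ => Real.sqrt_nonneg _
  have hβle : ∀ p : X × X, β ≤ ∑ y, Real.sqrt (W p.1 y * W p.2 y) := fun p =>
    ciInf_le (Finite.bddBelow_range _) p
  intro n
  induction n with
  | zero => intro f g; simp
  | succ n ih =>
    intro f g
    set s : X → X → Y → ℝ := fun a b y0 => Real.sqrt (W a y0 * W b y0) with hs
    have hprod : ∀ (y0 : Y) (yt : Fin n → Y),
        s (f 0 Fin.elim0) (g 0 Fin.elim0) y0
          * ∏ t : Fin n,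
            Real.sqrt (W ((fun t pre => f t.succ (Fin.cons y0 pre)) t
                (fun i => yt ⟨i.1, lt_trans i.2 t.2⟩)) (yt t)
              * W ((fun t pre => g t.succ (Fin.cons y0 pre)) t
                (fun i => yt ⟨i.1, lt_trans i.2 t.2⟩)) (yt t))
        = ∏ t : Fin (n + 1),
          Real.sqrt (W (f t (fun i => Fin.cons (α := fun _ => Y) y0 yt ⟨i.1, lt_trans i.2 t.2⟩))
              (Fin.cons (α := fun _ => Y) y0 yt t)
            * W (g t (fun i => Fin.cons (α := fun _ => Y) y0 yt ⟨i.1, lt_trans i.2 t.2⟩))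
              (Fin.cons (α := fun _ => Y) y0 yt t)) := by
      intro y0 yt
      rw [Fin.prod_univ_succ]
      have h1 : (fun i : Fin ((0 : Fin (n + 1)).1) =>
          Fin.cons (α := fun _ => Y) y0 yt ⟨i.1, lt_trans i.2 (0 : Fin (n + 1)).2⟩) = Fin.elim0 :=
        funext fun i => absurd i.2 (by simp)
      have h2 : ∀ t : Fin n, (fun i : Fin ((t.succ : Fin (n + 1)).1) =>
          Fin.cons (α := fun _ => Y) y0 yt ⟨i.1, lt_trans i.2 (t.succ : Fin (n + 1)).2⟩)
          = Fin.cons y0 (fun i : Fin t.1 => yt ⟨i.1, lt_trans i.2 t.2⟩) := by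
        intro t
        funext i
        refine Fin.cases ?_ (fun j => ?_) i
        · show Fin.cons (α := fun _ => Y) y0 yt ⟨(0 : Fin (t.1 + 1)).1, _⟩ = _
          rw [Fin.cons_zero]
          show Fin.cons (α := fun _ => Y) y0 yt ⟨0, _⟩ = y0
          exact congrArg (Fin.cons (α := fun _ => Y) y0 yt) (Fin.ext (by simp)) |>.trans (Fin.cons_zero _ _)
        · show Fin.cons (α := fun _ => Y) y0 yt ⟨(j.succ : Fin (t.1 + 1)).1, _⟩ = _
          rw [Fin.cons_succ]
          show Fin.cons (α := fun _ => Y) y0 yt (Fin.succ ⟨j.1, lt_trans j.2 t.2⟩) = _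
          rw [Fin.cons_succ]
      rw [h1, Fin.cons_zero]
      congr 1
      refine Finset.prod_congr rfl fun t _ => ?_
      rw [h2 t, Fin.cons_succ]
    have step1 : (∑ y : Fin (n + 1) → Y, ∏ t : Fin (n + 1),
          Real.sqrt (W (f t (fun i => y ⟨i.1, lt_trans i.2 t.2⟩)) (y t)
            * W (g t (fun i => y ⟨i.1, lt_trans i.2 t.2⟩)) (y t)))
        = ∑ p : Y × (Fin n → Y),
            s (f 0 Fin.elim0) (g 0 Fin.elim0) p.1
              * ∏ t : Fin n,
                Real.sqrt (W ((fun t pre => f t.succ (Fin.cons p.1 pre)) t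
                    (fun i => p.2 ⟨i.1, lt_trans i.2 t.2⟩)) (p.2 t)
                  * W ((fun t pre => g t.succ (Fin.cons p.1 pre)) t
                    (fun i => p.2 ⟨i.1, lt_trans i.2 t.2⟩)) (p.2 t)) :=
      (Fintype.sum_equiv (Fin.consEquiv fun _ : Fin (n + 1) => Y) _ _
        fun p => hprod p.1 p.2).symm
    rw [step1, Fintype.sum_prod_type]
    calc β ^ (n + 1) = β * β ^ n := by ring
      _ ≤ (∑ y0, s (f 0 Fin.elim0) (g 0 Fin.elim0) y0) * β ^ n :=
          mul_le_mul_of_nonneg_right (hβle (f 0 Fin.elim0, g 0 Fin.elim0))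
            (pow_nonneg hβ0 n)
      _ = ∑ y0, s (f 0 Fin.elim0) (g 0 Fin.elim0) y0 * β ^ n := Finset.sum_mul _ _ _
      _ ≤ ∑ y0, s (f 0 Fin.elim0) (g 0 Fin.elim0) y0
            * ∑ yt : Fin n → Y, ∏ t : Fin n,
              Real.sqrt (W ((fun t pre => f t.succ (Fin.cons y0 pre)) t
                  (fun i => yt ⟨i.1, lt_trans i.2 t.2⟩)) (yt t)
                * W ((fun t pre => g t.succ (Fin.cons y0 pre)) t
                  (fun i => yt ⟨i.1, lt_trans i.2 t.2⟩)) (yt t)) := by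
          refine Finset.sum_le_sum fun y0 _ => mul_le_mul_of_nonneg_left ?_
            (Real.sqrt_nonneg _)
          exact ih (fun t pre => f t.succ (Fin.cons y0 pre))
            (fun t pre => g t.succ (Fin.cons y0 pre))
      _ = _ := Finset.sum_congr rfl fun y0 _ => Finset.mul_sum _ _ _

/-- every length-`n` error-free feedback code with two equiprobable
messages has erasure probability at least half the `n`-th power of the minimum
Bhattacharyya coefficient `min_{x,x̃} ∑_y √(W(y|x)W(y|x̃))`. -/
theorem pera_ge_half_bhattacharyya_pow {X Y : Type} [Fintype X] [Fintype Y] [Nonempty X]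
    (W : X → Y → ℝ) (hW0 : ∀ x y, 0 ≤ W x y) (hW1 : ∀ x, ∑ y, W x y = 1) (n : ℕ)
    (c : FBCode X Y 2 n 1) (herrfree : FBCode.Perr W c = 0) :
    (1 / 2) * (⨅ p : X × X, ∑ y, Real.sqrt (W p.1 y * W p.2 y)) ^ n
      ≤ FBCode.Pera W c := by
  classical
  set β := (⨅ p : X × X, ∑ y, Real.sqrt (W p.1 y * W p.2 y)) with hβ
  have hβ0 : 0 ≤ β :=
    Real.iInf_nonneg fun p => Finset.sum_nonneg fun y _ => Real.sqrt_nonneg _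
  have hout0 : ∀ (m : Fin 2) (y : Fin n → Y), 0 ≤ FBCode.outProb W c m y :=
    fun m y => Finset.prod_nonneg fun t _ => hW0 _ _
  have hif : ∀ (m : Fin 2) (y : Fin n → Y) (S : Finset (Fin 2)),
      0 ≤ (if m ∈ S then 0 else c.dec y (some S)) := by
    intro m y S
    split_ifs
    · exact le_rfl
    · exact c.dec_nonneg y (some S)
  -- pointwise consequence of zero error probability
  have hzero : ∀ (m : Fin 2) (y : Fin n → Y),
      FBCode.outProb W c m y
        * (∑ S : Finset (Fin 2), if m ∈ S then 0 else c.dec y (some S)) = 0 := by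
    unfold FBCode.Perr at herrfree
    have hne : ((2 : ℕ) : ℝ)⁻¹ ≠ 0 := by norm_num
    have hsum : ∑ m : Fin 2, ∑ y : Fin n → Y,
        FBCode.outProb W c m y
          * (∑ S : Finset (Fin 2), if m ∈ S then 0 else c.dec y (some S)) = 0 := by
      rcases mul_eq_zero.1 herrfree with h | h
      · exact absurd h hne
      · exact h
    have hterm : ∀ (m : Fin 2) (y : Fin n → Y),
        0 ≤ FBCode.outProb W c m y
          * (∑ S : Finset (Fin 2), if m ∈ S then 0 else c.dec y (some S)) :=
      fun m y => mul_nonneg (hout0 m y) (Finset.sum_nonneg fun S _ => hif m y S)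
    intro m y
    have hm := (Finset.sum_eq_zero_iff_of_nonneg fun m _ =>
      Finset.sum_nonneg fun y _ => hterm m y).1 hsum m (Finset.mem_univ m)
    exact (Finset.sum_eq_zero_iff_of_nonneg fun y _ => hterm m y).1 hm y
      (Finset.mem_univ y)
  -- on the set where both messages are possible, the decoder must erase
  have hdecnone : ∀ y : Fin n → Y, FBCode.outProb W c 0 y ≠ 0 →
      FBCode.outProb W c 1 y ≠ 0 → c.dec y none = 1 := by
    intro y h0 h1
    have e0 : ∑ S : Finset (Fin 2), (if (0 : Fin 2) ∈ S then 0 else c.dec y (some S)) = 0 :=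
      (mul_eq_zero.1 (hzero 0 y)).resolve_left h0
    have e1 : ∑ S : Finset (Fin 2), (if (1 : Fin 2) ∈ S then 0 else c.dec y (some S)) = 0 :=
      (mul_eq_zero.1 (hzero 1 y)).resolve_left h1
    have e0' := (Finset.sum_eq_zero_iff_of_nonneg fun S _ => hif 0 y S).1 e0
    have e1' := (Finset.sum_eq_zero_iff_of_nonneg fun S _ => hif 1 y S).1 e1
    have hall : ∀ S : Finset (Fin 2), c.dec y (some S) = 0 := by
      intro S
      by_cases hS0 : (0 : Fin 2) ∈ S
      · by_cases hS1 : (1 : Fin 2) ∈ S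
        · by_contra hne
          have hcard := c.dec_size y S hne
          have : 1 < S.card := Finset.one_lt_card.mpr ⟨0, hS0, 1, hS1, by decide⟩
          omega
        · have := e1' S (Finset.mem_univ S)
          rwa [if_neg hS1] at this
      · have := e0' S (Finset.mem_univ S)
        rwa [if_neg hS0] at this
    have hsum1 := c.dec_sum y
    rw [univ_option, Finset.sum_insertNone,
      Finset.sum_eq_zero fun S _ => hall S] at hsum1
    linarith
  -- Bhattacharyya lower bound for the feedback code
  have key : β ^ n ≤ ∑ y : Fin n → Y,
      Real.sqrt (FBCode.outProb W c 0 y * FBCode.outProb W c 1 y) := by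
    refine le_trans (bhat_lower W hW0 n (c.enc 0) (c.enc 1)) (le_of_eq ?_)
    refine Finset.sum_congr rfl fun y _ => ?_
    unfold FBCode.outProb
    rw [← Finset.prod_mul_distrib,
      sqrt_finset_prod _ _ fun t _ => mul_nonneg (hW0 _ _) (hW0 _ _)]
  -- conclude
  calc (1 / 2) * β ^ n ≤ 1 * β ^ n :=
        mul_le_mul_of_nonneg_right (by norm_num) (pow_nonneg hβ0 n)
    _ = β ^ n := one_mul _
    _ ≤ ∑ y : Fin n → Y,
        Real.sqrt (FBCode.outProb W c 0 y * FBCode.outProb W c 1 y) := key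
    _ ≤ FBCode.Pera W c := by
        unfold FBCode.Pera
        rw [Fin.sum_univ_two, ← Finset.sum_add_distrib, Finset.mul_sum]
        refine Finset.sum_le_sum fun y _ => ?_
        have hd0 : 0 ≤ c.dec y none := c.dec_nonneg y none
        by_cases h0 : FBCode.outProb W c 0 y = 0
        · rw [h0, zero_mul, Real.sqrt_zero]
          have := hout0 1 y
          positivity
        · by_cases h1 : FBCode.outProb W c 1 y = 0
          · rw [h1, mul_zero, Real.sqrt_zero]
            have := hout0 0 y
            positivity
          · rw [hdecnone y h0 h1, mul_one, mul_one,
              Real.sqrt_mul (hout0 0 y)]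
            have ha := hout0 0 y
            have hb := hout0 1 y
            have h2 : ((2 : ℕ) : ℝ) = 2 := by norm_num
            rw [h2]
            nlinarith [sq_nonneg (Real.sqrt (FBCode.outProb W c 0 y)
                - Real.sqrt (FBCode.outProb W c 1 y)),
              Real.sq_sqrt ha, Real.sq_sqrt hb, Real.sqrt_nonneg (FBCode.outProb W c 0 y),
              Real.sqrt_nonneg (FBCode.outProb W c 1 y)]
end

section
/- Consider the Z-channel with input alphabet {0,1}, output alphabet {0,1}, W(ỹ|0) = q (crossover to the shared symbol) and W(ỹ|1) = 1, i.e., transition matrix [[1−q, q],[0,1]]. For any length-n error-free feedback code with two equiprobable messages, the erasure probability satisfies P_era ≥ q^{n/2}. Moreover, the non-feedback code that assigns message 1 to the 'always-ỹ' input and message 2 to the other input for the first ⌊n/2⌋ slots and swaps the assignment in the remaining slots achieves erasure probability at most q^{⌊n/2⌋}. -/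
open scoped BigOperators

namespace ZAux


lemma sqrt_prod {ι : Type*} (s : Finset ι) (f : ι → ℝ) (hf : ∀ i ∈ s, 0 ≤ f i) :
    Real.sqrt (∏ i ∈ s, f i) = ∏ i ∈ s, Real.sqrt (f i) := by
  induction s using Finset.cons_induction with
  | empty => simp
  | cons a s ha ih =>
    rw [Finset.prod_cons, Finset.prod_cons, Real.sqrt_mul (hf a (Finset.mem_cons_self a s)),
      ih (fun i hi => hf i (Finset.mem_cons_of_mem hi))]

lemma cons_prefix {n : ℕ} (b : Bool) (y : Fin n → Bool) (t : Fin n) :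
    (fun i : Fin t.succ.1 => Fin.cons (α := fun _ => Bool) b y ⟨i.1, lt_trans i.2 t.succ.2⟩) =
      Fin.cons (α := fun _ => Bool) b (fun i : Fin t.1 => y ⟨i.1, lt_trans i.2 t.2⟩) := by
  funext i
  rcases i with ⟨i, hi⟩
  cases i with
  | zero => rfl
  | succ j => rfl

lemma amgm (a b : ℝ) (ha : 0 ≤ a) (hb : 0 ≤ b) :
    Real.sqrt (a * b) ≤ (a + b) / 2 := by
  rw [Real.sqrt_mul ha]
  nlinarith [Real.sq_sqrt ha, Real.sq_sqrt hb, sq_nonneg (Real.sqrt a - Real.sqrt b),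
    Real.sqrt_nonneg a, Real.sqrt_nonneg b]

lemma key_sum {c : ℝ} (hc : 0 ≤ c) : ∀ (n : ℕ)
    (w : (t : Fin n) → (Fin t.1 → Bool) → Bool → ℝ),
    (∀ t h b, 0 ≤ w t h b) → (∀ t h, c ≤ ∑ b : Bool, w t h b) →
    c ^ n ≤ ∑ y : Fin n → Bool, ∏ t : Fin n,
      w t (fun i => y ⟨i.1, lt_trans i.2 t.2⟩) (y t) := by
  intro n
  induction n with
  | zero => intro w _ _; simp
  | succ n ih =>
    intro w hw hsum
    have hre : ∑ y : Fin (n+1) → Bool, ∏ t : Fin (n+1),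
        w t (fun i => y ⟨i.1, lt_trans i.2 t.2⟩) (y t)
        = ∑ p : Bool × (Fin n → Bool), ∏ t : Fin (n+1),
        w t (fun i => (Fin.cons (α := fun _ => Bool) p.1 p.2) ⟨i.1, lt_trans i.2 t.2⟩)
          (Fin.cons (α := fun _ => Bool) p.1 p.2 t) := by
      rw [← Equiv.sum_comp (Fin.consEquiv (fun _ : Fin (n+1) => Bool))]
      rfl
    rw [hre, Fintype.sum_prod_type]
    have hterm : ∀ (b : Bool) (y : Fin n → Bool),
        (∏ t : Fin (n+1), w t (fun i => (Fin.cons (α := fun _ => Bool) b y)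
            ⟨i.1, lt_trans i.2 t.2⟩) (Fin.cons (α := fun _ => Bool) b y t))
        = w 0 (fun i => (Fin.cons (α := fun _ => Bool) b y) ⟨i.1, i.elim0⟩) b *
          ∏ t : Fin n, (fun (t : Fin n) (h : Fin t.1 → Bool) => w t.succ (Fin.cons b h))
            t (fun i => y ⟨i.1, lt_trans i.2 t.2⟩) (y t) := by
      intro b y
      rw [Fin.prod_univ_succ]
      have h2 : ∀ t : Fin n, w t.succ
          (fun i => Fin.cons (α := fun _ => Bool) b y ⟨i.1, lt_trans i.2 t.succ.2⟩)
          (Fin.cons (α := fun _ => Bool) b y t.succ)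
          = w t.succ (Fin.cons (α := fun _ => Bool) b
            (fun i => y ⟨i.1, lt_trans i.2 t.2⟩)) (y t) := by
        intro t
        rw [Fin.cons_succ, cons_prefix]
      rw [Finset.prod_congr rfl (fun t _ => h2 t)]
      rfl
    have h0 : ∀ (b : Bool) (y : Fin n → Bool),
        (fun i : Fin ((0 : Fin (n+1)).1) =>
          Fin.cons (α := fun _ => Bool) b y ⟨i.1, i.elim0⟩) = (fun _ => true) := by
      intro b y
      funext i
      exact absurd i.2 (by simp)
    have hb : ∀ b : Bool, w 0 (fun _ => true) b * c ^ n ≤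
        ∑ y : Fin n → Bool, ∏ t : Fin (n+1),
          w t (fun i => Fin.cons (α := fun _ => Bool) b y ⟨i.1, lt_trans i.2 t.2⟩)
            (Fin.cons (α := fun _ => Bool) b y t) := by
      intro b
      have hsplit : ∑ y : Fin n → Bool, (∏ t : Fin (n+1),
          w t (fun i => Fin.cons (α := fun _ => Bool) b y ⟨i.1, lt_trans i.2 t.2⟩)
            (Fin.cons (α := fun _ => Bool) b y t))
          = w 0 (fun _ => true) b * ∑ y : Fin n → Bool, ∏ t : Fin n,
            (fun (t : Fin n) (h : Fin t.1 → Bool) => w t.succ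
              (Fin.cons (α := fun _ => Bool) b h)) t
              (fun i => y ⟨i.1, lt_trans i.2 t.2⟩) (y t) := by
        rw [Finset.mul_sum]
        refine Finset.sum_congr rfl fun y _ => ?_
        rw [hterm b y, h0 b y]
      rw [hsplit]
      refine mul_le_mul_of_nonneg_left
        (ih (fun (t : Fin n) (h : Fin t.1 → Bool) => w t.succ
          (Fin.cons (α := fun _ => Bool) b h))
          (fun t h b' => hw _ _ _) (fun t h => hsum _ _)) (hw _ _ _)
    calc c ^ (n+1) = c * c ^ n := by ring
    _ ≤ (∑ b : Bool, w 0 (fun _ => true) b) * c ^ n :=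
        mul_le_mul_of_nonneg_right (hsum 0 _) (pow_nonneg hc n)
    _ = ∑ b : Bool, w 0 (fun _ => true) b * c ^ n := Finset.sum_mul _ _ _
    _ ≤ _ := Finset.sum_le_sum fun b _ => hb b


def Wz (q : ℝ) : Bool → Bool → ℝ := fun x y =>
  if x then (if y then 1 else 0) else (if y then q else 1 - q)

lemma Wz_nonneg {q : ℝ} (h0 : 0 ≤ q) (h1 : q ≤ 1) : ∀ x y, 0 ≤ Wz q x y := by
  intro x y; cases x <;> cases y <;> simp [Wz] <;> linarith

lemma card_filter_lt (n k : ℕ) :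
    (Finset.univ.filter (fun t : Fin n => t.1 < k)).card = min k n := by
  rw [← Finset.card_image_of_injective _ Fin.val_injective]
  have h : (Finset.univ.filter (fun t : Fin n => t.1 < k)).image Fin.val
      = Finset.range (min k n) := by
    ext a
    simp only [Finset.mem_image, Finset.mem_filter, Finset.mem_univ, true_and,
      Finset.mem_range, lt_min_iff]
    constructor
    · rintro ⟨t, ht, rfl⟩; exact ⟨ht, t.2⟩
    · rintro ⟨h1, h2⟩; exact ⟨⟨a, h2⟩, h1, rfl⟩
  rw [h, Finset.card_range]

def Ok (n k : ℕ) (m : Fin 2) (y : Fin n → Bool) : Prop :=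
  ∀ t : Fin n, ((t.1 < k) ↔ m = 0) → y t = true

instance (n k : ℕ) (m : Fin 2) (y : Fin n → Bool) : Decidable (Ok n k m y) := by
  unfold Ok; infer_instance

def D (n k : ℕ) (y : Fin n → Bool) : Option (Finset (Fin 2)) :=
  if Ok n k 0 y ∧ Ok n k 1 y then none
  else if Ok n k 0 y then some {0}
  else if Ok n k 1 y then some {1}
  else none

noncomputable def code (n k : ℕ) : FBCode Bool Bool 2 n 1 where
  enc := fun m t _ => decide ((t.1 < k) ↔ m = 0)
  dec := fun y o => if o = D n k y then 1 else 0
  dec_nonneg := by intro y o; split <;> norm_num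
  dec_sum := by intro y; simp
  dec_size := by
    intro y S h
    have hS : some S = D n k y := by
      by_contra hne; simp [hne] at h
    clear h
    unfold D at hS
    split_ifs at hS <;> rw [Option.some.inj hS] <;> simp

lemma ok_of_pos {q : ℝ} (hq0 : 0 < q) (hq1 : q < 1) {n k : ℕ} {m : Fin 2}
    {y : Fin n → Bool} (h : FBCode.outProb (Wz q) (code n k) m y ≠ 0) :
    Ok n k m y := by
  intro t ht
  by_contra hyt
  apply h
  unfold FBCode.outProb
  refine Finset.prod_eq_zero (Finset.mem_univ t) ?_
  have : (code n k).enc m t (fun i => y ⟨i.1, lt_trans i.2 t.2⟩) = true := by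
    simp [code, ht]
  rw [this]
  simp at hyt
  rw [hyt]
  simp [Wz]

lemma all_true_of_ok {n k : ℕ} {y : Fin n → Bool}
    (h0 : Ok n k 0 y) (h1 : Ok n k 1 y) : y = fun _ => true := by
  funext t
  by_cases ht : t.1 < k
  · exact h0 t (by simp [ht])
  · exact h1 t (by simp [ht])

lemma mem_of_ok {n k : ℕ} {y : Fin n → Bool} {m : Fin 2} (hok : Ok n k m y)
    {S : Finset (Fin 2)} (hD : D n k y = some S) : m ∈ S := by
  unfold D at hD
  fin_cases m <;> split_ifs at hD with h1 h2 h3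
  · simp [← Option.some.inj hD]
  · exact absurd hok h2
  · exact absurd ⟨h2, hok⟩ h1
  · simp [← Option.some.inj hD]

lemma D_eq_none {n k : ℕ} {y : Fin n → Bool} (h : D n k y = none)
    {m : Fin 2} (hok : Ok n k m y) : Ok n k 0 y ∧ Ok n k 1 y := by
  unfold D at h
  split_ifs at h with h1 h2 h3
  · exact h1
  · fin_cases m
    · exact absurd hok h2
    · exact absurd hok h3

lemma perr_zero {q : ℝ} (hq0 : 0 < q) (hq1 : q < 1) (n k : ℕ) :
    FBCode.Perr (Wz q) (code n k) = 0 := by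
  unfold FBCode.Perr
  rw [mul_eq_zero]
  right
  refine Finset.sum_eq_zero fun m _ => Finset.sum_eq_zero fun y _ => ?_
  rcases eq_or_ne (FBCode.outProb (Wz q) (code n k) m y) 0 with h | h
  · rw [h, zero_mul]
  · have hok := ok_of_pos hq0 hq1 h
    rw [mul_eq_zero]; right
    refine Finset.sum_eq_zero fun S _ => ?_
    by_cases hm : m ∈ S
    · simp [hm]
    · simp only [hm, if_false]
      show (if some S = D n k y then (1:ℝ) else 0) = 0
      have : some S ≠ D n k y := fun hc => hm (mem_of_ok hok hc.symm)
      simp [this]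

lemma pera_le {q : ℝ} (hq0 : 0 < q) (hq1 : q < 1) (n k : ℕ) (hk : 2 * k ≤ n) :
    FBCode.Pera (Wz q) (code n k) ≤ q ^ k := by
  have hkn : k ≤ n := le_trans (Nat.le_mul_of_pos_left k (by norm_num)) hk
  unfold FBCode.Pera
  have hsum_y : ∀ m : Fin 2,
      ∑ y : Fin n → Bool, FBCode.outProb (Wz q) (code n k) m y * (code n k).dec y none
      = FBCode.outProb (Wz q) (code n k) m (fun _ => true) := by
    intro m
    rw [Finset.sum_eq_single_of_mem (fun _ => true) (Finset.mem_univ _)]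
    · have hD : D n k (fun _ : Fin n => true) = none := by
        unfold D; rw [if_pos ⟨fun t _ => rfl, fun t _ => rfl⟩]
      show _ * (if (none : Option (Finset (Fin 2))) = D n k (fun _ : Fin n => true)
        then (1:ℝ) else 0) = _
      rw [hD, if_pos rfl, mul_one]
    · intro y _ hy
      rcases eq_or_ne (FBCode.outProb (Wz q) (code n k) m y) 0 with h | h
      · rw [h, zero_mul]
      · have hok := ok_of_pos hq0 hq1 h
        have hd : (code n k).dec y none = 0 := by
          show (if (none : Option (Finset (Fin 2))) = D n k y then (1:ℝ) else 0) = 0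
          have hne : D n k y ≠ none := fun hD =>
            hy (all_true_of_ok (D_eq_none hD hok).1 (D_eq_none hD hok).2)
          simp [Ne.symm hne]
        rw [hd, mul_zero]
  have hout : ∀ m : Fin 2, FBCode.outProb (Wz q) (code n k) m (fun _ => true)
      = q ^ (Finset.univ.filter (fun t : Fin n => ¬((t.1 < k) ↔ m = 0))).card := by
    intro m
    unfold FBCode.outProb
    have hterm : ∀ t : Fin n,
        Wz q ((code n k).enc m t (fun i => (fun _ : Fin n => true) ⟨i.1, lt_trans i.2 t.2⟩))
          ((fun _ : Fin n => true) t)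
        = if (t.1 < k) ↔ m = 0 then (1:ℝ) else q := by
      intro t
      by_cases h : (t.1 < k) ↔ m = 0 <;> simp [code, Wz, h]
    rw [Finset.prod_congr rfl fun t _ => hterm t, Finset.prod_ite,
      Finset.prod_const_one, one_mul, Finset.prod_const]
  have hc0 : (Finset.univ.filter (fun t : Fin n => ¬((t.1 < k) ↔ (0 : Fin 2) = 0))).card
      = n - k := by
    have he : (Finset.univ.filter (fun t : Fin n => ¬((t.1 < k) ↔ (0 : Fin 2) = 0)))
        = Finset.univ.filter (fun t : Fin n => ¬(t.1 < k)) := by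
      apply Finset.filter_congr; intro t _; simp
    rw [he]
    have := Finset.card_filter_add_card_filter_not
      (s := (Finset.univ : Finset (Fin n))) (p := fun t : Fin n => t.1 < k)
    rw [card_filter_lt, min_eq_left hkn] at this
    simp only [Finset.card_univ, Fintype.card_fin] at this
    omega
  have hc1 : (Finset.univ.filter (fun t : Fin n => ¬((t.1 < k) ↔ (1 : Fin 2) = 0))).card
      = k := by
    have he : (Finset.univ.filter (fun t : Fin n => ¬((t.1 < k) ↔ (1 : Fin 2) = 0)))
        = Finset.univ.filter (fun t : Fin n => t.1 < k) := by
      apply Finset.filter_congr; intro t _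
      simp [show (1 : Fin 2) ≠ 0 by decide]
    rw [he, card_filter_lt, min_eq_left hkn]
  rw [Finset.sum_congr rfl fun m _ => hsum_y m, Fin.sum_univ_two, hout 0, hout 1, hc0, hc1]
  have h1 : q ^ (n - k) ≤ q ^ k := pow_le_pow_of_le_one hq0.le hq1.le (by omega)
  have h2 : 0 < q ^ k := pow_pos hq0 k
  norm_num
  linarith

lemma rpow_half (q : ℝ) (hq0 : 0 ≤ q) (n : ℕ) :
    Real.rpow q ((n : ℝ) / 2) = Real.sqrt q ^ n := by
  rw [Real.sqrt_eq_rpow, ← Real.rpow_natCast (q ^ (1/(2:ℝ))) n, ← Real.rpow_mul hq0]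
  rw [div_eq_mul_inv, mul_comm]
  norm_num

lemma lower_bound {q : ℝ} (hq0 : 0 < q) (hq1 : q < 1) {n : ℕ}
    (c : FBCode Bool Bool 2 n 1) (hPerr : FBCode.Perr (Wz q) c = 0) :
    Real.rpow q ((n : ℝ) / 2) ≤ FBCode.Pera (Wz q) c := by
  have hWnn := Wz_nonneg hq0.le hq1.le
  set P : Fin 2 → (Fin n → Bool) → ℝ := FBCode.outProb (Wz q) c with hP
  have hPnn : ∀ m y, 0 ≤ P m y := fun m y =>
    Finset.prod_nonneg fun t _ => hWnn _ _
  -- every Perr term vanishes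
  have hzero : ∀ (m : Fin 2) (y : Fin n → Bool),
      P m y * ∑ S : Finset (Fin 2), (if m ∈ S then 0 else c.dec y (some S)) = 0 := by
    have hsum : ∑ m : Fin 2, ∑ y : Fin n → Bool,
        P m y * ∑ S : Finset (Fin 2), (if m ∈ S then 0 else c.dec y (some S)) = 0 := by
      have := hPerr
      unfold FBCode.Perr at this
      rcases mul_eq_zero.1 this with h | h
      · norm_num at h
      · exact h
    have hnn : ∀ (m : Fin 2) (y : Fin n → Bool), 0 ≤
        P m y * ∑ S : Finset (Fin 2), (if m ∈ S then 0 else c.dec y (some S)) := by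
      intro m y
      refine mul_nonneg (hPnn m y) (Finset.sum_nonneg fun S _ => ?_)
      split
      · exact le_refl 0
      · exact c.dec_nonneg y (some S)
    intro m y
    have h1 := (Finset.sum_eq_zero_iff_of_nonneg
      (fun m _ => Finset.sum_nonneg fun y _ => hnn m y)).1 hsum m (Finset.mem_univ m)
    exact (Finset.sum_eq_zero_iff_of_nonneg (fun y _ => hnn m y)).1 h1 y (Finset.mem_univ y)
  have hdecS : ∀ (y : Fin n → Bool), P 0 y ≠ 0 → P 1 y ≠ 0 →
      ∀ S : Finset (Fin 2), c.dec y (some S) = 0 := by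
    intro y h0 h1 S
    by_cases hcard : S.card ≤ 1
    · have hex : ∃ m : Fin 2, m ∉ S := by
        by_contra hall
        push_neg at hall
        have : S = Finset.univ := Finset.eq_univ_of_forall hall
        rw [this] at hcard
        simp at hcard
      obtain ⟨m, hm⟩ := hex
      have := hzero m y
      rcases mul_eq_zero.1 this with h | h
      · fin_cases m
        · exact absurd h h0
        · exact absurd h h1
      · have h2 := (Finset.sum_eq_zero_iff_of_nonneg (fun S' _ => by
          split
          · exact le_refl 0
          · exact c.dec_nonneg y (some S'))).1 h S (Finset.mem_univ S)
        simpa [hm] using h2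
    · by_contra hne
      exact hcard (c.dec_size y S hne)
  have hdec1 : ∀ (y : Fin n → Bool), P 0 y ≠ 0 → P 1 y ≠ 0 → c.dec y none = 1 := by
    intro y h0 h1
    have hs := c.dec_sum y
    have hs2 : c.dec y none + ∑ S : Finset (Fin 2), c.dec y (some S) = 1 := by
      rw [← hs, ← Finset.sum_insertNone]
      rfl
    have h3 : ∑ S : Finset (Fin 2), c.dec y (some S) = 0 :=
      Finset.sum_eq_zero fun S _ => hdecS y h0 h1 S
    rw [h3, add_zero] at hs2
    exact hs2
  -- Pera ≥ Bhattacharyya sum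
  have hstep1 : ∑ y : Fin n → Bool, Real.sqrt (P 0 y * P 1 y) ≤ FBCode.Pera (Wz q) c := by
    unfold FBCode.Pera
    rw [Fin.sum_univ_two, ← Finset.sum_add_distrib, Finset.mul_sum]
    refine Finset.sum_le_sum fun y _ => ?_
    show Real.sqrt (P 0 y * P 1 y) ≤ _
    rcases eq_or_ne (P 0 y) 0 with h0 | h0
    · rw [h0, zero_mul, Real.sqrt_zero]
      have : (0:ℝ) ≤ P 0 y * c.dec y none + P 1 y * c.dec y none :=
        add_nonneg (mul_nonneg (hPnn 0 y) (c.dec_nonneg y none))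
          (mul_nonneg (hPnn 1 y) (c.dec_nonneg y none))
      positivity
    rcases eq_or_ne (P 1 y) 0 with h1 | h1
    · rw [h1, mul_zero, Real.sqrt_zero]
      have : (0:ℝ) ≤ P 0 y * c.dec y none + P 1 y * c.dec y none :=
        add_nonneg (mul_nonneg (hPnn 0 y) (c.dec_nonneg y none))
          (mul_nonneg (hPnn 1 y) (c.dec_nonneg y none))
      positivity
    rw [hdec1 y h0 h1, mul_one, mul_one]
    have := amgm (P 0 y) (P 1 y) (hPnn 0 y) (hPnn 1 y)
    linarith
  -- Bhattacharyya sum factorizes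
  have hfac : ∀ y : Fin n → Bool, Real.sqrt (P 0 y * P 1 y)
      = ∏ t : Fin n, Real.sqrt
          (Wz q (c.enc 0 t (fun i => y ⟨i.1, lt_trans i.2 t.2⟩)) (y t) *
           Wz q (c.enc 1 t (fun i => y ⟨i.1, lt_trans i.2 t.2⟩)) (y t)) := by
    intro y
    rw [hP]
    unfold FBCode.outProb
    rw [← Finset.prod_mul_distrib]
    exact sqrt_prod _ _ fun t _ => mul_nonneg (hWnn _ _) (hWnn _ _)
  have hkey : Real.sqrt q ^ n ≤ ∑ y : Fin n → Bool, Real.sqrt (P 0 y * P 1 y) := by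
    rw [Finset.sum_congr rfl fun y _ => hfac y]
    refine key_sum (Real.sqrt_nonneg q) n
      (fun t h b => Real.sqrt (Wz q (c.enc 0 t h) b * Wz q (c.enc 1 t h) b))
      (fun t h b => Real.sqrt_nonneg _) ?_
    intro t h
    rw [Fintype.sum_bool]
    have hq1' : 0 ≤ 1 - q := by linarith
    have hsq : Real.sqrt q ≤ 1 := by
      rw [show (1:ℝ) = Real.sqrt 1 by simp]
      exact Real.sqrt_le_sqrt hq1.le
    cases hc0 : c.enc 0 t h <;> cases hc1 : c.enc 1 t h <;>
      simp [Wz, hc0, hc1, Real.sqrt_mul_self hq0.le, Real.sqrt_mul_self hq1'] <;>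
      linarith
  rw [rpow_half q hq0.le n]
  exact le_trans hkey hstep1

end ZAux

/-- for the Z-channel with crossover `q` (inputs `false = x₁`,
`true = x₂`, outputs `false = y₀`, `true = ỹ`), any length-`n` error-free
two-message feedback code has erasure probability at least `q^{n/2}`, and the
non-feedback code assigning message `0` to the always-`ỹ` input on the first
`⌊n/2⌋` slots and swapping afterwards is error free with erasure probability at
most `q^{⌊n/2⌋}`. -/
theorem zchannel_erasure_bounds (q : ℝ) (hq0 : 0 < q) (hq1 : q < 1) (n : ℕ) :
    let W : Bool → Bool → ℝ := fun x y =>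
      if x then (if y then 1 else 0) else (if y then q else 1 - q)
    (∀ c : FBCode Bool Bool 2 n 1, FBCode.Perr W c = 0 →
        Real.rpow q ((n : ℝ) / 2) ≤ FBCode.Pera W c) ∧
      (∃ c : FBCode Bool Bool 2 n 1,
        (∀ (m : Fin 2) (t : Fin n) (h : Fin t.1 → Bool),
          c.enc m t h = decide ((t.1 < n / 2) ↔ m = 0)) ∧
        FBCode.Perr W c = 0 ∧ FBCode.Pera W c ≤ q ^ (n / 2)) := by
  intro W
  constructor
  · intro c h
    exact ZAux.lower_bound hq0 hq1 c h
  · exact ⟨ZAux.code n (n / 2), fun m t h => rfl,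
      ZAux.perr_zero hq0 hq1 n (n / 2),
      ZAux.pera_le hq0 hq1 n (n / 2) (by omega)⟩
end

section
/- For any probability distribution P on a finite input alphabet X and DMC W, define e(R, P, Q) = min over stochastic matrices V with I(P, V) ≤ R and output marginal PV = Q of the conditional divergence D(V‖W|P) (with value +∞ if no such V exists). Then e(R, P, Q) is jointly convex in the pair (R, Q). -/
open scoped BigOperators ENNReal

/-- `e(R, P, Q)`: the minimum conditional divergence `D(V‖W|P)` over stochastic
matrices `V` (absolutely continuous with respect to `W` where `P` is positive)
with mutual information `I(P,V) ≤ R` and output marginal `PV = Q`; `+∞` if no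
such `V` exists. -/
noncomputable def eSphere {X Y : Type} [Fintype X] [Fintype Y]
    (W : X → Y → ℝ) (P : X → ℝ) (R : ℝ) (Q : Y → ℝ) : ℝ≥0∞ :=
  sInf {d | ∃ V : X → Y → ℝ, (∀ a b, 0 ≤ V a b) ∧ (∀ a, ∑ b, V a b = 1) ∧
    (∀ a b, P a ≠ 0 → W a b = 0 → V a b = 0) ∧
    (∑ a, ∑ b, P a * V a b * Real.log (V a b / ∑ a', P a' * V a' b)) ≤ R ∧
    (∀ b, ∑ a, P a * V a b = Q b) ∧
    d = ENNReal.ofReal (∑ a, P a * ∑ b, V a b * Real.log (V a b / W a b))}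

lemma logsum2 (a1 a2 b1 b2 : ℝ) (ha1 : 0 ≤ a1) (ha2 : 0 ≤ a2) (hb1 : 0 ≤ b1)
    (hb2 : 0 ≤ b2) (h1 : b1 = 0 → a1 = 0) (h2 : b2 = 0 → a2 = 0) :
    (a1 + a2) * Real.log ((a1 + a2) / (b1 + b2)) ≤
      a1 * Real.log (a1 / b1) + a2 * Real.log (a2 / b2) := by
  rcases eq_or_lt_of_le hb1 with hb1' | hb1'
  · rw [h1 hb1'.symm, ← hb1']; simp
  rcases eq_or_lt_of_le hb2 with hb2' | hb2'
  · rw [h2 hb2'.symm, ← hb2']; simp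
  rcases eq_or_lt_of_le ha1 with ha1' | ha1'
  · rw [← ha1']
    simp only [zero_add, zero_mul]
    rcases eq_or_lt_of_le ha2 with ha2' | ha2'
    · rw [← ha2']; simp
    have : Real.log (a2 / (b1 + b2)) ≤ Real.log (a2 / b2) :=
      Real.log_le_log (div_pos ha2' (by linarith))
        (div_le_div_of_nonneg_left ha2'.le hb2' (by linarith))
    nlinarith
  rcases eq_or_lt_of_le ha2 with ha2' | ha2'
  · rw [← ha2']
    simp only [add_zero, zero_mul]
    have : Real.log (a1 / (b1 + b2)) ≤ Real.log (a1 / b1) :=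
      Real.log_le_log (div_pos ha1' (by linarith))
        (div_le_div_of_nonneg_left ha1'.le hb1' (by linarith))
    nlinarith
  have hA : (0:ℝ) < a1 + a2 := by linarith
  have hB : (0:ℝ) < b1 + b2 := by linarith
  have key : ∀ a b : ℝ, 0 < a → 0 < b →
      a * (b1 + b2) - b * (a1 + a2) ≤
        (b1 + b2) * (a * Real.log (a / b) - a * Real.log ((a1 + a2) / (b1 + b2))) := by
    intro a b ha hb
    have hab : 0 < a / b := div_pos ha hb
    have hAB : 0 < (a1 + a2) / (b1 + b2) := div_pos hA hB
    have hr : 0 < (a / b) / ((a1 + a2) / (b1 + b2)) := div_pos hab hAB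
    have hlog := Real.one_sub_inv_le_log_of_pos hr
    rw [Real.log_div hab.ne' hAB.ne'] at hlog
    have hmul := mul_le_mul_of_nonneg_left hlog
      (by positivity : (0:ℝ) ≤ (b1 + b2) * a)
    have he : (b1 + b2) * a * (1 - ((a / b) / ((a1 + a2) / (b1 + b2)))⁻¹) =
        a * (b1 + b2) - b * (a1 + a2) := by
      field_simp
    rw [he] at hmul
    nlinarith [hmul]
  have K1 := key a1 b1 ha1' hb1'
  have K2 := key a2 b2 ha2' hb2'
  have hE : 0 ≤ (b1 + b2) * (a1 * Real.log (a1 / b1) + a2 * Real.log (a2 / b2)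
      - (a1 + a2) * Real.log ((a1 + a2) / (b1 + b2))) := by nlinarith [K1, K2]
  nlinarith [hE, hB]

/-- `e(R,P,Q)` is jointly convex in the pair `(R,Q)`. -/
theorem eSphere_jointly_convex {X Y : Type} [Fintype X] [Fintype Y]
    (W : X → Y → ℝ) (hW0 : ∀ x y, 0 ≤ W x y) (hW1 : ∀ x, ∑ y, W x y = 1)
    (P : X → ℝ) (hP0 : ∀ a, 0 ≤ P a) (hP1 : ∑ a, P a = 1)
    (Ra Rb : ℝ) (Qa Qb : Y → ℝ) (γ : ℝ) (hγ : γ ∈ Set.Icc (0 : ℝ) 1) :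
    eSphere W P (γ * Ra + (1 - γ) * Rb) (fun b => γ * Qa b + (1 - γ) * Qb b)
      ≤ ENNReal.ofReal γ * eSphere W P Ra Qa
        + ENNReal.ofReal (1 - γ) * eSphere W P Rb Qb := by
  obtain ⟨hγ0, hγ1⟩ := hγ
  rcases eq_or_lt_of_le hγ0 with h0 | h0
  · rw [← h0]
    simp
  rcases eq_or_lt_of_le hγ1 with h1 | h1
  · rw [h1]
    simp
  have h1γ : 0 < 1 - γ := by linarith
  by_cases hA : eSphere W P Ra Qa = ⊤
  · rw [hA, ENNReal.mul_top (by simp [ENNReal.ofReal_eq_zero]; linarith), top_add]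
    exact le_top
  by_cases hB : eSphere W P Rb Qb = ⊤
  · rw [hB, ENNReal.mul_top (by simp [ENNReal.ofReal_eq_zero]; linarith), add_top]
    exact le_top
  -- key pointwise combination
  have key : ∀ da ∈ {d | ∃ V : X → Y → ℝ, (∀ a b, 0 ≤ V a b) ∧ (∀ a, ∑ b, V a b = 1) ∧
      (∀ a b, P a ≠ 0 → W a b = 0 → V a b = 0) ∧
      (∑ a, ∑ b, P a * V a b * Real.log (V a b / ∑ a', P a' * V a' b)) ≤ Ra ∧
      (∀ b, ∑ a, P a * V a b = Qa b) ∧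
      d = ENNReal.ofReal (∑ a, P a * ∑ b, V a b * Real.log (V a b / W a b))},
      ∀ db ∈ {d | ∃ V : X → Y → ℝ, (∀ a b, 0 ≤ V a b) ∧ (∀ a, ∑ b, V a b = 1) ∧
      (∀ a b, P a ≠ 0 → W a b = 0 → V a b = 0) ∧
      (∑ a, ∑ b, P a * V a b * Real.log (V a b / ∑ a', P a' * V a' b)) ≤ Rb ∧
      (∀ b, ∑ a, P a * V a b = Qb b) ∧
      d = ENNReal.ofReal (∑ a, P a * ∑ b, V a b * Real.log (V a b / W a b))},
      eSphere W P (γ * Ra + (1 - γ) * Rb) (fun b => γ * Qa b + (1 - γ) * Qb b)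
        ≤ ENNReal.ofReal γ * da + ENNReal.ofReal (1 - γ) * db := by
    rintro da ⟨Va, hVa0, hVa1, hVaW, hIa, hMa, rfl⟩ db ⟨Vb, hVb0, hVb1, hVbW, hIb, hMb, rfl⟩
    set V : X → Y → ℝ := fun a b => γ * Va a b + (1 - γ) * Vb a b with hV
    have hV0 : ∀ a b, 0 ≤ V a b := fun a b => by
      have := hVa0 a b; have := hVb0 a b; simp only [hV]; nlinarith
    have hV1 : ∀ a, ∑ b, V a b = 1 := by
      intro a
      simp only [hV, Finset.sum_add_distrib, ← Finset.mul_sum, hVa1 a, hVb1 a]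
      ring
    have hVW : ∀ a b, P a ≠ 0 → W a b = 0 → V a b = 0 := by
      intro a b hPa hWab
      simp only [hV, hVaW a b hPa hWab, hVbW a b hPa hWab]
      ring
    have hM : ∀ b, ∑ a, P a * V a b = γ * Qa b + (1 - γ) * Qb b := by
      intro b
      simp only [hV, mul_add, Finset.sum_add_distrib]
      rw [← hMa b, ← hMb b, Finset.mul_sum, Finset.mul_sum]
      congr 1 <;> exact Finset.sum_congr rfl fun a _ => by ring
    -- abs continuity consequences of the marginal sums
    have hmargA : ∀ a b, P a ≠ 0 → (∑ a', P a' * Va a' b) = 0 → Va a b = 0 := by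
      intro a b hPa hz
      have hterm : P a * Va a b = 0 := by
        have := (Finset.sum_eq_zero_iff_of_nonneg (fun a' _ =>
          mul_nonneg (hP0 a') (hVa0 a' b))).mp hz a (Finset.mem_univ a)
        exact this
      rcases mul_eq_zero.mp hterm with h | h
      · exact absurd h hPa
      · exact h
    have hmargB : ∀ a b, P a ≠ 0 → (∑ a', P a' * Vb a' b) = 0 → Vb a b = 0 := by
      intro a b hPa hz
      have hterm : P a * Vb a b = 0 :=
        (Finset.sum_eq_zero_iff_of_nonneg (fun a' _ =>
          mul_nonneg (hP0 a') (hVb0 a' b))).mp hz a (Finset.mem_univ a)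
      rcases mul_eq_zero.mp hterm with h | h
      · exact absurd h hPa
      · exact h
    -- mutual information constraint
    have hI : (∑ a, ∑ b, P a * V a b * Real.log (V a b / ∑ a', P a' * V a' b))
        ≤ γ * Ra + (1 - γ) * Rb := by
      have step : (∑ a, ∑ b, P a * V a b * Real.log (V a b / ∑ a', P a' * V a' b))
          ≤ γ * (∑ a, ∑ b, P a * Va a b * Real.log (Va a b / ∑ a', P a' * Va a' b))
            + (1 - γ) * (∑ a, ∑ b, P a * Vb a b * Real.log (Vb a b / ∑ a', P a' * Vb a' b)) := by
        rw [Finset.mul_sum, Finset.mul_sum, ← Finset.sum_add_distrib]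
        apply Finset.sum_le_sum
        intro a _
        rw [Finset.mul_sum, Finset.mul_sum, ← Finset.sum_add_distrib]
        apply Finset.sum_le_sum
        intro b _
        by_cases hPa : P a = 0
        · simp [hPa]
        have hPa' : 0 < P a := lt_of_le_of_ne (hP0 a) (Ne.symm hPa)
        have hQA0 : 0 ≤ ∑ a', P a' * Va a' b :=
          Finset.sum_nonneg fun a' _ => mul_nonneg (hP0 a') (hVa0 a' b)
        have hQB0 : 0 ≤ ∑ a', P a' * Vb a' b :=
          Finset.sum_nonneg fun a' _ => mul_nonneg (hP0 a') (hVb0 a' b)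
        have hls := logsum2 (γ * Va a b) ((1 - γ) * Vb a b)
          (γ * (∑ a', P a' * Va a' b)) ((1 - γ) * (∑ a', P a' * Vb a' b))
          (mul_nonneg h0.le (hVa0 a b)) (mul_nonneg h1γ.le (hVb0 a b))
          (mul_nonneg h0.le hQA0) (mul_nonneg h1γ.le hQB0)
          (by intro h
              have : (∑ a', P a' * Va a' b) = 0 := by
                rcases mul_eq_zero.mp h with h' | h'
                · exact absurd h' (ne_of_gt h0)
                · exact h'
              rw [hmargA a b hPa this]; ring)
          (by intro h
              have : (∑ a', P a' * Vb a' b) = 0 := by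
                rcases mul_eq_zero.mp h with h' | h'
                · exact absurd h' (ne_of_gt h1γ)
                · exact h'
              rw [hmargB a b hPa this]; ring)
        rw [mul_div_mul_left _ _ (ne_of_gt h0), mul_div_mul_left _ _ (ne_of_gt h1γ)] at hls
        have hVm : ∑ a', P a' * V a' b
            = γ * (∑ a', P a' * Va a' b) + (1 - γ) * (∑ a', P a' * Vb a' b) := by
          simp only [hV, mul_add, Finset.sum_add_distrib, Finset.mul_sum]
          congr 1 <;> exact Finset.sum_congr rfl fun a' _ => by ring
        have hVab : V a b = γ * Va a b + (1 - γ) * Vb a b := rfl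
        rw [hVab, hVm]
        calc P a * (γ * Va a b + (1 - γ) * Vb a b) *
              Real.log ((γ * Va a b + (1 - γ) * Vb a b) /
                (γ * (∑ a', P a' * Va a' b) + (1 - γ) * (∑ a', P a' * Vb a' b)))
            = P a * ((γ * Va a b + (1 - γ) * Vb a b) *
              Real.log ((γ * Va a b + (1 - γ) * Vb a b) /
                (γ * (∑ a', P a' * Va a' b) + (1 - γ) * (∑ a', P a' * Vb a' b)))) := by ring
          _ ≤ P a * (γ * Va a b * Real.log (Va a b / ∑ a', P a' * Va a' b)
              + (1 - γ) * Vb a b * Real.log (Vb a b / ∑ a', P a' * Vb a' b)) := by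
              apply mul_le_mul_of_nonneg_left _ (hP0 a)
              convert hls using 2 <;> ring
          _ = γ * (P a * Va a b * Real.log (Va a b / ∑ a', P a' * Va a' b))
              + (1 - γ) * (P a * Vb a b * Real.log (Vb a b / ∑ a', P a' * Vb a' b)) := by ring
      calc (∑ a, ∑ b, P a * V a b * Real.log (V a b / ∑ a', P a' * V a' b))
          ≤ _ := step
        _ ≤ γ * Ra + (1 - γ) * Rb := by
            have := mul_le_mul_of_nonneg_left hIa h0.le
            have := mul_le_mul_of_nonneg_left hIb h1γ.le
            linarith
    -- divergence convexity
    have hD : (∑ a, P a * ∑ b, V a b * Real.log (V a b / W a b))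
        ≤ γ * (∑ a, P a * ∑ b, Va a b * Real.log (Va a b / W a b))
          + (1 - γ) * (∑ a, P a * ∑ b, Vb a b * Real.log (Vb a b / W a b)) := by
      rw [Finset.mul_sum, Finset.mul_sum, ← Finset.sum_add_distrib]
      apply Finset.sum_le_sum
      intro a _
      by_cases hPa : P a = 0
      · simp [hPa]
      simp only [Finset.mul_sum]
      rw [← Finset.sum_add_distrib]
      apply Finset.sum_le_sum
      intro b _
      have hls := logsum2 (γ * Va a b) ((1 - γ) * Vb a b)
        (γ * W a b) ((1 - γ) * W a b)
        (mul_nonneg h0.le (hVa0 a b)) (mul_nonneg h1γ.le (hVb0 a b))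
        (mul_nonneg h0.le (hW0 a b)) (mul_nonneg h1γ.le (hW0 a b))
        (by intro h
            have hw : W a b = 0 := by
              rcases mul_eq_zero.mp h with h' | h'
              · exact absurd h' (ne_of_gt h0)
              · exact h'
            rw [hVaW a b hPa hw]; ring)
        (by intro h
            have hw : W a b = 0 := by
              rcases mul_eq_zero.mp h with h' | h'
              · exact absurd h' (ne_of_gt h1γ)
              · exact h'
            rw [hVbW a b hPa hw]; ring)
      rw [mul_div_mul_left _ _ (ne_of_gt h0), mul_div_mul_left _ _ (ne_of_gt h1γ)] at hls
      have hw : γ * W a b + (1 - γ) * W a b = W a b := by ring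
      rw [hw] at hls
      have hVab : V a b = γ * Va a b + (1 - γ) * Vb a b := rfl
      rw [hVab]
      calc P a * ((γ * Va a b + (1 - γ) * Vb a b) *
            Real.log ((γ * Va a b + (1 - γ) * Vb a b) / W a b))
          ≤ P a * (γ * Va a b * Real.log (Va a b / W a b)
            + (1 - γ) * Vb a b * Real.log (Vb a b / W a b)) := by
            apply mul_le_mul_of_nonneg_left _ (hP0 a)
            convert hls using 2 <;> ring
        _ = γ * (P a * (Va a b * Real.log (Va a b / W a b)))
            + (1 - γ) * (P a * (Vb a b * Real.log (Vb a b / W a b))) := by ring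
    -- conclude
    have hmem : ENNReal.ofReal (∑ a, P a * ∑ b, V a b * Real.log (V a b / W a b))
        ∈ {d | ∃ V : X → Y → ℝ, (∀ a b, 0 ≤ V a b) ∧ (∀ a, ∑ b, V a b = 1) ∧
        (∀ a b, P a ≠ 0 → W a b = 0 → V a b = 0) ∧
        (∑ a, ∑ b, P a * V a b * Real.log (V a b / ∑ a', P a' * V a' b))
          ≤ γ * Ra + (1 - γ) * Rb ∧
        (∀ b, ∑ a, P a * V a b = γ * Qa b + (1 - γ) * Qb b) ∧
        d = ENNReal.ofReal (∑ a, P a * ∑ b, V a b * Real.log (V a b / W a b))} :=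
      ⟨V, hV0, hV1, hVW, hI, hM, rfl⟩
    calc eSphere W P (γ * Ra + (1 - γ) * Rb) (fun b => γ * Qa b + (1 - γ) * Qb b)
        ≤ ENNReal.ofReal (∑ a, P a * ∑ b, V a b * Real.log (V a b / W a b)) :=
          sInf_le hmem
      _ ≤ ENNReal.ofReal (γ * (∑ a, P a * ∑ b, Va a b * Real.log (Va a b / W a b))
            + (1 - γ) * (∑ a, P a * ∑ b, Vb a b * Real.log (Vb a b / W a b))) :=
          ENNReal.ofReal_le_ofReal hD
      _ ≤ ENNReal.ofReal (γ * (∑ a, P a * ∑ b, Va a b * Real.log (Va a b / W a b)))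
            + ENNReal.ofReal ((1 - γ) * (∑ a, P a * ∑ b, Vb a b * Real.log (Vb a b / W a b))) :=
          ENNReal.ofReal_add_le
      _ = _ := by rw [ENNReal.ofReal_mul h0.le, ENNReal.ofReal_mul h1γ.le]
  -- use approximation by elements of the sets
  apply ENNReal.le_of_forall_pos_le_add
  intro ε hε _
  have hεne : (ε : ℝ≥0∞) ≠ 0 := by exact_mod_cast hε.ne'
  have hAlt : eSphere W P Ra Qa < eSphere W P Ra Qa + ε := ENNReal.lt_add_right hA hεne
  have hBlt : eSphere W P Rb Qb < eSphere W P Rb Qb + ε := ENNReal.lt_add_right hB hεne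
  rw [eSphere] at hAlt
  rw [eSphere] at hBlt
  obtain ⟨da, hda, hdalt⟩ := sInf_lt_iff.mp hAlt
  obtain ⟨db, hdb, hdblt⟩ := sInf_lt_iff.mp hBlt
  have hgle : ENNReal.ofReal γ ≤ 1 := by
    rw [← ENNReal.ofReal_one]; exact ENNReal.ofReal_le_ofReal (by linarith)
  have hgle' : ENNReal.ofReal (1 - γ) ≤ 1 := by
    rw [← ENNReal.ofReal_one]; exact ENNReal.ofReal_le_ofReal (by linarith)
  calc eSphere W P (γ * Ra + (1 - γ) * Rb) (fun b => γ * Qa b + (1 - γ) * Qb b)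
      ≤ ENNReal.ofReal γ * da + ENNReal.ofReal (1 - γ) * db := key da hda db hdb
    _ ≤ ENNReal.ofReal γ * (eSphere W P Ra Qa + ε)
        + ENNReal.ofReal (1 - γ) * (eSphere W P Rb Qb + ε) := by
        gcongr
        · exact hdalt.le
        · exact hdblt.le
    _ = (ENNReal.ofReal γ * eSphere W P Ra Qa + ENNReal.ofReal (1 - γ) * eSphere W P Rb Qb)
        + (ENNReal.ofReal γ * ε + ENNReal.ofReal (1 - γ) * ε) := by ring
    _ ≤ (ENNReal.ofReal γ * eSphere W P Ra Qa + ENNReal.ofReal (1 - γ) * eSphere W P Rb Qb)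
        + ε := by
        have heq : ENNReal.ofReal γ * (ε : ℝ≥0∞) + ENNReal.ofReal (1 - γ) * ε
            = (ε : ℝ≥0∞) := by
          rw [← add_mul, ← ENNReal.ofReal_add (by linarith) (by linarith)]
          norm_num
        exact add_le_add le_rfl (le_of_eq heq)
end

section
/- Fix a DMC W with transition matrices W_a(y|x₁,x₂) = W(y|x₁) and W_r(y|x₁,x₂) = W(y|x₂) on the product input alphabet X². For a joint input distribution λ on X², define h(T, λ) = min over conditional distributions U(·|x₁,x₂) with D(U‖W_a|λ) ≤ T of D(U‖W_r|λ). Then h(T, λ) = sup_{μ>0} [ −μT − (1+μ) ∑_{x₁,x₂} λ(x₁,x₂) log ∑_y W(y|x₁)^{μ/(1+μ)} W(y|x₂)^{1/(1+μ)} ]; in particular the inner minimization over U at each fixed μ is attained by the tilted channel U_s(y|x₁,x₂) = W(y|x₁)^{1−s}W(y|x₂)^s / ∑_{ỹ} W(ỹ|x₁)^{1−s}W(ỹ|x₂)^s with s = 1/(1+μ). -/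
open scoped BigOperators

noncomputable section

variable {X Y : Type} [Fintype X] [Fintype Y]

/-- Conditional divergence `D(U‖V|λ)` on the product input alphabet `X²`. -/
def condDiv2 (lam : X × X → ℝ) (U V : X × X → Y → ℝ) : ℝ :=
  ∑ p : X × X, lam p * ∑ y, U p y * Real.log (U p y / V p y)

/-- `W_a(y|x₁,x₂) = W(y|x₁)`. -/
def Wacc (W : X → Y → ℝ) : X × X → Y → ℝ := fun p y => W p.1 y

/-- `W_r(y|x₁,x₂) = W(y|x₂)`. -/
def Wrej (W : X → Y → ℝ) : X × X → Y → ℝ := fun p y => W p.2 y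

/-- A conditional distribution on `Y` given `X²`, absolutely continuous with
respect to both `W_a` and `W_r`. -/
def IsCondDist2 (W : X → Y → ℝ) (U : X × X → Y → ℝ) : Prop :=
  (∀ p y, 0 ≤ U p y) ∧ (∀ p, ∑ y, U p y = 1) ∧
    (∀ p y, W p.1 y = 0 ∨ W p.2 y = 0 → U p y = 0)

/-- The tilted channel `U_s(y|x₁,x₂) ∝ W(y|x₁)^{1−s} W(y|x₂)^s`. -/
def tiltedU (W : X → Y → ℝ) (s : ℝ) : X × X → Y → ℝ := fun p y =>
  W p.1 y ^ (1 - s) * W p.2 y ^ s / ∑ y', W p.1 y' ^ (1 - s) * W p.2 y' ^ s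

/-- The boundary channel `U₀(y|x₁,x₂) ∝ 1{W(y|x₂)>0}·W(y|x₁)`. -/
def tiltedU0 (W : X → Y → ℝ) : X × X → Y → ℝ := fun p y =>
  (if 0 < W p.2 y then W p.1 y else 0) / ∑ y', if 0 < W p.2 y' then W p.1 y' else 0

/-- `h(T,λ) = min { D(U‖W_r|λ) : D(U‖W_a|λ) ≤ T }`. -/
def hTwo (W : X → Y → ℝ) (lam : X × X → ℝ) (T : ℝ) : ℝ :=
  sInf {d | ∃ U : X × X → Y → ℝ, IsCondDist2 W U ∧
    condDiv2 lam U (Wacc W) ≤ T ∧ d = condDiv2 lam U (Wrej W)}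

end

namespace HTwoAux

open Finset Real Filter Topology

set_option linter.unusedSectionVars false

variable {X Y : Type} [Fintype X] [Fintype Y]

noncomputable section

def SuppP (W : X → Y → ℝ) (p : X × X) : Finset Y :=
  Finset.univ.filter (fun y => 0 < W p.1 y ∧ 0 < W p.2 y)

lemma mem_SuppP {W : X → Y → ℝ} {p : X × X} {y : Y} :
    y ∈ SuppP W p ↔ 0 < W p.1 y ∧ 0 < W p.2 y := by
  simp [SuppP]

def Zf (W : X → Y → ℝ) (p : X × X) (s : ℝ) : ℝ :=
  ∑ y ∈ SuppP W p, W p.1 y ^ (1 - s) * W p.2 y ^ s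

def uf (W : X → Y → ℝ) (p : X × X) (y : Y) (s : ℝ) : ℝ :=
  W p.1 y ^ (1 - s) * W p.2 y ^ s / Zf W p s

variable {W : X → Y → ℝ}

lemma suppP_nonempty (hW0 : ∀ x y, 0 ≤ W x y)
    (hsupp : ∀ p : X × X, 0 < ∑ y, if 0 < W p.2 y then W p.1 y else 0) (p : X × X) :
    (SuppP W p).Nonempty := by
  by_contra h
  rw [Finset.not_nonempty_iff_eq_empty] at h
  have : ∑ y, (if 0 < W p.2 y then W p.1 y else 0) = 0 := by
    apply Finset.sum_eq_zero
    intro y _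
    split_ifs with h2
    · by_contra h1
      have h1' : 0 < W p.1 y := lt_of_le_of_ne (hW0 _ _) (Ne.symm h1)
      have : y ∈ SuppP W p := mem_SuppP.2 ⟨h1', h2⟩
      simp [h] at this
    · rfl
  linarith [hsupp p]

lemma Zf_pos (hW0 : ∀ x y, 0 ≤ W x y)
    (hsupp : ∀ p : X × X, 0 < ∑ y, if 0 < W p.2 y then W p.1 y else 0)
    (p : X × X) (s : ℝ) : 0 < Zf W p s := by
  apply Finset.sum_pos
  · intro y hy
    obtain ⟨h1, h2⟩ := mem_SuppP.1 hy
    exact mul_pos (Real.rpow_pos_of_pos h1 _) (Real.rpow_pos_of_pos h2 _)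
  · exact suppP_nonempty hW0 hsupp p

lemma uf_pos (hW0 : ∀ x y, 0 ≤ W x y)
    (hsupp : ∀ p : X × X, 0 < ∑ y, if 0 < W p.2 y then W p.1 y else 0)
    {p : X × X} {y : Y} (hy : y ∈ SuppP W p) (s : ℝ) : 0 < uf W p y s := by
  obtain ⟨h1, h2⟩ := mem_SuppP.1 hy
  exact div_pos (mul_pos (Real.rpow_pos_of_pos h1 _) (Real.rpow_pos_of_pos h2 _))
    (Zf_pos hW0 hsupp p s)

lemma sum_uf (hW0 : ∀ x y, 0 ≤ W x y)
    (hsupp : ∀ p : X × X, 0 < ∑ y, if 0 < W p.2 y then W p.1 y else 0)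
    (p : X × X) (s : ℝ) : ∑ y ∈ SuppP W p, uf W p y s = 1 := by
  simp only [uf]
  rw [← Finset.sum_div, ← Zf, div_self (ne_of_gt (Zf_pos hW0 hsupp p s))]

lemma num_eq_zero (hW0 : ∀ x y, 0 ≤ W x y) {p : X × X} {y : Y}
    (hy : y ∉ SuppP W p) {s : ℝ} (hs0 : 0 < s) (hs1 : s < 1) :
    W p.1 y ^ (1 - s) * W p.2 y ^ s = 0 := by
  rw [mem_SuppP] at hy
  push_neg at hy
  rcases lt_or_eq_of_le (hW0 p.1 y) with h1 | h1
  · have h2 : W p.2 y = 0 := le_antisymm (le_of_not_gt (fun h => by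
      exact absurd (hy h1) (not_le.2 h))) (hW0 p.2 y)
    rw [h2, Real.zero_rpow (ne_of_gt hs0), mul_zero]
  · rw [← h1, Real.zero_rpow (by linarith), zero_mul]

lemma denom_eq (hW0 : ∀ x y, 0 ≤ W x y) (p : X × X) {s : ℝ} (hs0 : 0 < s) (hs1 : s < 1) :
    ∑ y, W p.1 y ^ (1 - s) * W p.2 y ^ s = Zf W p s := by
  rw [Zf]
  symm
  apply Finset.sum_subset (Finset.subset_univ _)
  intro y _ hy
  exact num_eq_zero hW0 hy hs0 hs1

lemma tiltedU_eq_uf (hW0 : ∀ x y, 0 ≤ W x y) {s : ℝ} (hs0 : 0 < s) (hs1 : s < 1)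
    (p : X × X) (y : Y) (hy : y ∈ SuppP W p) : tiltedU W s p y = uf W p y s := by
  rw [tiltedU, uf, denom_eq hW0 p hs0 hs1]

lemma tiltedU_eq_zero (hW0 : ∀ x y, 0 ≤ W x y) {s : ℝ} (hs0 : 0 < s) (hs1 : s < 1)
    (p : X × X) (y : Y) (hy : y ∉ SuppP W p) : tiltedU W s p y = 0 := by
  rw [tiltedU, num_eq_zero hW0 hy hs0 hs1, zero_div]

lemma Zf_zero_eq (hW0 : ∀ x y, 0 ≤ W x y) (p : X × X) :
    Zf W p 0 = ∑ y, if 0 < W p.2 y then W p.1 y else 0 := by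
  have h1 : Zf W p 0 = ∑ y ∈ SuppP W p, W p.1 y := by
    apply Finset.sum_congr rfl
    intro y _
    rw [sub_zero, Real.rpow_zero, Real.rpow_one, mul_one]
  rw [h1, Finset.sum_ite, Finset.sum_const_zero, add_zero]
  apply Finset.sum_subset
  · intro y hy
    obtain ⟨_, h2⟩ := mem_SuppP.1 hy
    simp [h2]
  · intro y hy hns
    rw [Finset.mem_filter] at hy
    by_contra h
    exact hns (mem_SuppP.2 ⟨lt_of_le_of_ne (hW0 _ _) (Ne.symm h), hy.2⟩)

lemma tiltedU0_eq_uf (hW0 : ∀ x y, 0 ≤ W x y)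
    (p : X × X) (y : Y) (hy : y ∈ SuppP W p) : tiltedU0 W p y = uf W p y 0 := by
  obtain ⟨h1, h2⟩ := mem_SuppP.1 hy
  rw [tiltedU0, uf, Zf_zero_eq hW0 p]
  rw [sub_zero, Real.rpow_zero, Real.rpow_one, mul_one, if_pos h2]

lemma tiltedU0_eq_zero (hW0 : ∀ x y, 0 ≤ W x y)
    (p : X × X) (y : Y) (hy : y ∉ SuppP W p) : tiltedU0 W p y = 0 := by
  rw [mem_SuppP] at hy
  push_neg at hy
  rw [tiltedU0]
  split_ifs with h2
  · have h1 : W p.1 y = 0 := by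
      by_contra h
      exact absurd h2 (not_lt.2 (hy (lt_of_le_of_ne (hW0 _ _) (Ne.symm h))))
    rw [h1, zero_div]
  · rw [zero_div]

def aF (W : X → Y → ℝ) (lam : X × X → ℝ) (s : ℝ) : ℝ :=
  ∑ p : X × X, lam p * ∑ y ∈ SuppP W p, uf W p y s * Real.log (uf W p y s / W p.1 y)

def rF (W : X → Y → ℝ) (lam : X × X → ℝ) (s : ℝ) : ℝ :=
  ∑ p : X × X, lam p * ∑ y ∈ SuppP W p, uf W p y s * Real.log (uf W p y s / W p.2 y)

def LF (W : X → Y → ℝ) (lam : X × X → ℝ) (s : ℝ) : ℝ :=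
  ∑ p : X × X, lam p * Real.log (Zf W p s)

lemma isCondDist2_tiltedU (hW0 : ∀ x y, 0 ≤ W x y)
    (hsupp : ∀ p : X × X, 0 < ∑ y, if 0 < W p.2 y then W p.1 y else 0)
    {s : ℝ} (hs0 : 0 < s) (hs1 : s < 1) : IsCondDist2 W (tiltedU W s) := by
  refine ⟨?_, ?_, ?_⟩
  · intro p y
    rw [tiltedU, denom_eq hW0 p hs0 hs1]
    exact div_nonneg (mul_nonneg (Real.rpow_nonneg (hW0 _ _) _)
      (Real.rpow_nonneg (hW0 _ _) _)) (le_of_lt (Zf_pos hW0 hsupp p s))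
  · intro p
    have e : ∑ y, tiltedU W s p y = ∑ y ∈ SuppP W p, tiltedU W s p y := by
      symm
      apply Finset.sum_subset (Finset.subset_univ _)
      intro y _ hy
      exact tiltedU_eq_zero hW0 hs0 hs1 p y hy
    rw [e, Finset.sum_congr rfl (fun y hy => tiltedU_eq_uf hW0 hs0 hs1 p y hy),
      sum_uf hW0 hsupp p s]
  · intro p y h
    rcases h with h | h
    · rw [tiltedU, h, Real.zero_rpow (by linarith), zero_mul, zero_div]
    · rw [tiltedU, h, Real.zero_rpow (ne_of_gt hs0), mul_zero, zero_div]

lemma isCondDist2_tiltedU0 (hW0 : ∀ x y, 0 ≤ W x y)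
    (hsupp : ∀ p : X × X, 0 < ∑ y, if 0 < W p.2 y then W p.1 y else 0) :
    IsCondDist2 W (tiltedU0 W) := by
  refine ⟨?_, ?_, ?_⟩
  · intro p y
    apply div_nonneg _ (le_of_lt (hsupp p))
    split_ifs
    · exact hW0 _ _
    · exact le_refl 0
  · intro p
    simp only [tiltedU0]
    rw [← Finset.sum_div, div_self (ne_of_gt (hsupp p))]
  · intro p y h
    rcases h with h | h
    · rw [tiltedU0, h]
      simp
    · rw [tiltedU0, if_neg (by rw [h]; exact lt_irrefl 0), zero_div]

lemma inner_sum_eq {U : X × X → Y → ℝ} {p : X × X}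
    (h0 : ∀ y, y ∉ SuppP W p → U p y = 0) (V : X × X → Y → ℝ) :
    ∑ y, U p y * Real.log (U p y / V p y)
      = ∑ y ∈ SuppP W p, U p y * Real.log (U p y / V p y) := by
  symm
  apply Finset.sum_subset (Finset.subset_univ _)
  intro y _ hy
  rw [h0 y hy, zero_mul]

lemma condDiv_tilted_acc (hW0 : ∀ x y, 0 ≤ W x y)
    (hsupp : ∀ p : X × X, 0 < ∑ y, if 0 < W p.2 y then W p.1 y else 0)
    (lam : X × X → ℝ) {s : ℝ} (hs0 : 0 < s) (hs1 : s < 1) :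
    condDiv2 lam (tiltedU W s) (Wacc W) = aF W lam s := by
  apply Finset.sum_congr rfl
  intro p _
  congr 1
  rw [inner_sum_eq (fun y hy => tiltedU_eq_zero hW0 hs0 hs1 p y hy)]
  exact Finset.sum_congr rfl (fun y hy => by rw [tiltedU_eq_uf hW0 hs0 hs1 p y hy]; rfl)

lemma condDiv_tilted_rej (hW0 : ∀ x y, 0 ≤ W x y)
    (hsupp : ∀ p : X × X, 0 < ∑ y, if 0 < W p.2 y then W p.1 y else 0)
    (lam : X × X → ℝ) {s : ℝ} (hs0 : 0 < s) (hs1 : s < 1) :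
    condDiv2 lam (tiltedU W s) (Wrej W) = rF W lam s := by
  apply Finset.sum_congr rfl
  intro p _
  congr 1
  rw [inner_sum_eq (fun y hy => tiltedU_eq_zero hW0 hs0 hs1 p y hy)]
  exact Finset.sum_congr rfl (fun y hy => by rw [tiltedU_eq_uf hW0 hs0 hs1 p y hy]; rfl)

lemma condDiv_tilted0_acc (hW0 : ∀ x y, 0 ≤ W x y)
    (hsupp : ∀ p : X × X, 0 < ∑ y, if 0 < W p.2 y then W p.1 y else 0)
    (lam : X × X → ℝ) :
    condDiv2 lam (tiltedU0 W) (Wacc W) = aF W lam 0 := by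
  apply Finset.sum_congr rfl
  intro p _
  congr 1
  rw [inner_sum_eq (fun y hy => tiltedU0_eq_zero hW0 p y hy)]
  exact Finset.sum_congr rfl (fun y hy => by rw [tiltedU0_eq_uf hW0 p y hy]; rfl)

lemma condDiv_tilted0_rej (hW0 : ∀ x y, 0 ≤ W x y)
    (hsupp : ∀ p : X × X, 0 < ∑ y, if 0 < W p.2 y then W p.1 y else 0)
    (lam : X × X → ℝ) :
    condDiv2 lam (tiltedU0 W) (Wrej W) = rF W lam 0 := by
  apply Finset.sum_congr rfl
  intro p _
  congr 1
  rw [inner_sum_eq (fun y hy => tiltedU0_eq_zero hW0 p y hy)]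
  exact Finset.sum_congr rfl (fun y hy => by rw [tiltedU0_eq_uf hW0 p y hy]; rfl)

lemma inner_identity (hW0 : ∀ x y, 0 ≤ W x y)
    (hsupp : ∀ p : X × X, 0 < ∑ y, if 0 < W p.2 y then W p.1 y else 0)
    (p : X × X) (s : ℝ) :
    s * (∑ y ∈ SuppP W p, uf W p y s * Real.log (uf W p y s / W p.2 y))
      + (1 - s) * (∑ y ∈ SuppP W p, uf W p y s * Real.log (uf W p y s / W p.1 y))
      = - Real.log (Zf W p s) := by
  rw [Finset.mul_sum, Finset.mul_sum, ← Finset.sum_add_distrib]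
  have key : ∀ y ∈ SuppP W p,
      s * (uf W p y s * Real.log (uf W p y s / W p.2 y))
        + (1 - s) * (uf W p y s * Real.log (uf W p y s / W p.1 y))
      = uf W p y s * (- Real.log (Zf W p s)) := by
    intro y hy
    obtain ⟨h1, h2⟩ := mem_SuppP.1 hy
    have hZ := Zf_pos hW0 hsupp p s
    have hn : (0:ℝ) < W p.1 y ^ (1 - s) * W p.2 y ^ s :=
      mul_pos (Real.rpow_pos_of_pos h1 _) (Real.rpow_pos_of_pos h2 _)
    have hu : 0 < uf W p y s := div_pos hn hZ
    have e1 : Real.log (uf W p y s)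
        = (1 - s) * Real.log (W p.1 y) + s * Real.log (W p.2 y) - Real.log (Zf W p s) := by
      rw [uf, Real.log_div (ne_of_gt hn) (ne_of_gt hZ),
        Real.log_mul (ne_of_gt (Real.rpow_pos_of_pos h1 _)) (ne_of_gt (Real.rpow_pos_of_pos h2 _)),
        Real.log_rpow h1, Real.log_rpow h2]
    rw [Real.log_div (ne_of_gt hu) (ne_of_gt h2), Real.log_div (ne_of_gt hu) (ne_of_gt h1), e1]
    ring
  rw [Finset.sum_congr rfl key, ← Finset.sum_mul, sum_uf hW0 hsupp p s, one_mul]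

lemma key_identity (hW0 : ∀ x y, 0 ≤ W x y)
    (hsupp : ∀ p : X × X, 0 < ∑ y, if 0 < W p.2 y then W p.1 y else 0)
    (lam : X × X → ℝ) (s : ℝ) :
    s * rF W lam s + (1 - s) * aF W lam s = - LF W lam s := by
  rw [rF, aF, LF, Finset.mul_sum, Finset.mul_sum, ← Finset.sum_add_distrib, ← Finset.sum_neg_distrib]
  apply Finset.sum_congr rfl
  intro p _
  have e : s * (lam p * ∑ y ∈ SuppP W p, uf W p y s * Real.log (uf W p y s / W p.2 y))
      + (1 - s) * (lam p * ∑ y ∈ SuppP W p, uf W p y s * Real.log (uf W p y s / W p.1 y))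
      = lam p * (s * (∑ y ∈ SuppP W p, uf W p y s * Real.log (uf W p y s / W p.2 y))
        + (1 - s) * (∑ y ∈ SuppP W p, uf W p y s * Real.log (uf W p y s / W p.1 y))) := by ring
  rw [e, inner_identity hW0 hsupp p s, mul_neg]

lemma gibbs (hW0 : ∀ x y, 0 ≤ W x y)
    (hsupp : ∀ p : X × X, 0 < ∑ y, if 0 < W p.2 y then W p.1 y else 0)
    {s : ℝ} (hs0 : 0 < s) (hs1 : s < 1)
    {U : X × X → Y → ℝ} (hU : IsCondDist2 W U) (p : X × X) :
    - Real.log (Zf W p s)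
      ≤ s * (∑ y, U p y * Real.log (U p y / W p.2 y))
        + (1 - s) * (∑ y, U p y * Real.log (U p y / W p.1 y)) := by
  obtain ⟨hU0, hU1, hUac⟩ := hU
  obtain ⟨hT0, hT1, _⟩ := isCondDist2_tiltedU (W := W) hW0 hsupp hs0 hs1
  have key : ∀ y : Y,
      U p y - tiltedU W s p y + U p y * (- Real.log (Zf W p s))
        ≤ s * (U p y * Real.log (U p y / W p.2 y))
          + (1 - s) * (U p y * Real.log (U p y / W p.1 y)) := by
    intro y
    rcases eq_or_lt_of_le (hU0 p y) with h | h
    · rw [← h]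
      simp only [zero_sub, zero_mul, mul_zero, add_zero]
      linarith [hT0 p y]
    · have h1 : 0 < W p.1 y := by
        rcases lt_or_eq_of_le (hW0 p.1 y) with h' | h'
        · exact h'
        · exact absurd (hUac p y (Or.inl h'.symm)) (ne_of_gt h)
      have h2 : 0 < W p.2 y := by
        rcases lt_or_eq_of_le (hW0 p.2 y) with h' | h'
        · exact h'
        · exact absurd (hUac p y (Or.inr h'.symm)) (ne_of_gt h)
      have hy : y ∈ SuppP W p := mem_SuppP.2 ⟨h1, h2⟩
      have hZ := Zf_pos hW0 hsupp p s
      have hu : 0 < uf W p y s := uf_pos hW0 hsupp hy s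
      have hte : tiltedU W s p y = uf W p y s := tiltedU_eq_uf hW0 hs0 hs1 p y hy
      have e1 : Real.log (uf W p y s)
          = (1 - s) * Real.log (W p.1 y) + s * Real.log (W p.2 y) - Real.log (Zf W p s) := by
        have hn : (0:ℝ) < W p.1 y ^ (1 - s) * W p.2 y ^ s :=
          mul_pos (Real.rpow_pos_of_pos h1 _) (Real.rpow_pos_of_pos h2 _)
        rw [uf, Real.log_div (ne_of_gt hn) (ne_of_gt hZ),
          Real.log_mul (ne_of_gt (Real.rpow_pos_of_pos h1 _)) (ne_of_gt (Real.rpow_pos_of_pos h2 _)),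
          Real.log_rpow h1, Real.log_rpow h2]
      have hgibbs : U p y - uf W p y s ≤ U p y * (Real.log (U p y) - Real.log (uf W p y s)) := by
        have hlog : Real.log (uf W p y s) - Real.log (U p y) ≤ uf W p y s / U p y - 1 := by
          have := Real.log_le_sub_one_of_pos (div_pos hu h)
          rwa [Real.log_div (ne_of_gt hu) (ne_of_gt h)] at this
        have h2' := mul_le_mul_of_nonneg_left hlog (le_of_lt h)
        have h3 : U p y * (uf W p y s / U p y - 1) = uf W p y s - U p y := by
          field_simp
        rw [h3] at h2'
        nlinarith [h2']
      have erhs : s * (U p y * Real.log (U p y / W p.2 y))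
          + (1 - s) * (U p y * Real.log (U p y / W p.1 y))
          = U p y * (Real.log (U p y) - Real.log (uf W p y s)) + U p y * (- Real.log (Zf W p s)) := by
        rw [Real.log_div (ne_of_gt h) (ne_of_gt h2), Real.log_div (ne_of_gt h) (ne_of_gt h1), e1]
        ring
      rw [erhs, hte]
      linarith
  have hsum := Finset.sum_le_sum (fun y (_ : y ∈ Finset.univ) => key y)
  rw [Finset.sum_add_distrib, Finset.sum_sub_distrib, hU1 p, hT1 p, ← Finset.sum_mul, hU1 p,
    one_mul, Finset.sum_add_distrib, ← Finset.mul_sum, ← Finset.mul_sum] at hsum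
  linarith

lemma lagrange_lb (hW0 : ∀ x y, 0 ≤ W x y)
    (hsupp : ∀ p : X × X, 0 < ∑ y, if 0 < W p.2 y then W p.1 y else 0)
    (lam : X × X → ℝ) (hl0 : ∀ p, 0 ≤ lam p)
    {s : ℝ} (hs0 : 0 < s) (hs1 : s < 1)
    {U : X × X → Y → ℝ} (hU : IsCondDist2 W U) :
    - LF W lam s ≤ s * condDiv2 lam U (Wrej W) + (1 - s) * condDiv2 lam U (Wacc W) := by
  simp only [condDiv2, Wrej, Wacc, LF]
  rw [← Finset.sum_neg_distrib, Finset.mul_sum, Finset.mul_sum, ← Finset.sum_add_distrib]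
  apply Finset.sum_le_sum
  intro p _
  have e : s * (lam p * ∑ y, U p y * Real.log (U p y / W p.2 y))
      + (1 - s) * (lam p * ∑ y, U p y * Real.log (U p y / W p.1 y))
      = lam p * (s * (∑ y, U p y * Real.log (U p y / W p.2 y))
        + (1 - s) * (∑ y, U p y * Real.log (U p y / W p.1 y))) := by ring
  rw [e, ← mul_neg]
  exact mul_le_mul_of_nonneg_left (gibbs hW0 hsupp hs0 hs1 hU p) (hl0 p)

lemma part2 (hW0 : ∀ x y, 0 ≤ W x y)
    (hsupp : ∀ p : X × X, 0 < ∑ y, if 0 < W p.2 y then W p.1 y else 0)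
    (lam : X × X → ℝ) (hl0 : ∀ p, 0 ≤ lam p)
    {μ : ℝ} (hμ : 0 < μ) {U : X × X → Y → ℝ} (hU : IsCondDist2 W U) :
    condDiv2 lam (tiltedU W (1 / (1 + μ))) (Wrej W)
        + μ * condDiv2 lam (tiltedU W (1 / (1 + μ))) (Wacc W)
      ≤ condDiv2 lam U (Wrej W) + μ * condDiv2 lam U (Wacc W) := by
  set s := 1 / (1 + μ) with hs
  have h1μ : (0:ℝ) < 1 + μ := by linarith
  have hs0 : 0 < s := by positivity
  have hs1 : s < 1 := by rw [hs, div_lt_one h1μ]; linarith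
  have hms : μ * s = 1 - s := by rw [hs]; field_simp; ring
  have e : ∀ t u : ℝ, s * (t + μ * u) = s * t + (1 - s) * u := by
    intro t u; rw [← hms]; ring
  have hL := lagrange_lb hW0 hsupp lam hl0 hs0 hs1 hU
  have hE := key_identity hW0 hsupp lam s
  rw [condDiv_tilted_rej hW0 hsupp lam hs0 hs1, condDiv_tilted_acc hW0 hsupp lam hs0 hs1]
  have h4 : s * (rF W lam s + μ * aF W lam s)
      ≤ s * (condDiv2 lam U (Wrej W) + μ * condDiv2 lam U (Wacc W)) := by
    rw [e, e]; linarith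
  exact le_of_mul_le_mul_left h4 hs0

def GF (W : X → Y → ℝ) (lam : X × X → ℝ) (T s : ℝ) : ℝ :=
  -((1 - s) / s) * T - (1 / s) * LF W lam s

lemma GF_eq (hW0 : ∀ x y, 0 ≤ W x y)
    (hsupp : ∀ p : X × X, 0 < ∑ y, if 0 < W p.2 y then W p.1 y else 0)
    (lam : X × X → ℝ) (T : ℝ) {s : ℝ} (hs0 : 0 < s) :
    GF W lam T s = rF W lam s + ((1 - s) / s) * (aF W lam s - T) := by
  have hE := key_identity hW0 hsupp lam s
  have hLF : LF W lam s = -(s * rF W lam s + (1 - s) * aF W lam s) := by linarith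
  rw [GF, hLF]
  field_simp
  ring

lemma dual_mem (hW0 : ∀ x y, 0 ≤ W x y)
    (lam : X × X → ℝ) (T : ℝ) {s : ℝ} (hs0 : 0 < s) (hs1 : s < 1) :
    ∃ μ : ℝ, 0 < μ ∧
      GF W lam T s = -μ * T - (1 + μ) * ∑ p : X × X, lam p *
        Real.log (∑ y, W p.1 y ^ (μ / (1 + μ)) * W p.2 y ^ (1 / (1 + μ))) := by
  refine ⟨(1 - s) / s, div_pos (by linarith) hs0, ?_⟩
  have h1 : 1 + (1 - s) / s = 1 / s := by field_simp; ring
  have h2 : (1 - s) / s / (1 + (1 - s) / s) = 1 - s := by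
    rw [h1]; field_simp
  have h3 : 1 / (1 + (1 - s) / s) = s := by
    rw [h1]; simp
  rw [h2, h3, h1, GF]
  congr 1
  congr 1
  apply Finset.sum_congr rfl
  intro p _
  rw [denom_eq hW0 p hs0 hs1]

lemma weak_duality (hW0 : ∀ x y, 0 ≤ W x y)
    (hsupp : ∀ p : X × X, 0 < ∑ y, if 0 < W p.2 y then W p.1 y else 0)
    (lam : X × X → ℝ) (hl0 : ∀ p, 0 ≤ lam p) (T : ℝ)
    {s : ℝ} (hs0 : 0 < s) (hs1 : s < 1)
    {U : X × X → Y → ℝ} (hU : IsCondDist2 W U)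
    (hfeas : condDiv2 lam U (Wacc W) ≤ T) :
    GF W lam T s ≤ condDiv2 lam U (Wrej W) := by
  have hL := lagrange_lb hW0 hsupp lam hl0 hs0 hs1 hU
  rw [← sub_nonneg, GF]
  have key : condDiv2 lam U (Wrej W) - (-((1 - s) / s) * T - (1 / s) * LF W lam s)
      = (1 / s) * ((s * condDiv2 lam U (Wrej W) + (1 - s) * condDiv2 lam U (Wacc W)
          + LF W lam s) + (1 - s) * (T - condDiv2 lam U (Wacc W))) := by
    field_simp
    ring
  rw [key]
  apply mul_nonneg (by positivity)
  have h1 : 0 ≤ s * condDiv2 lam U (Wrej W) + (1 - s) * condDiv2 lam U (Wacc W)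
      + LF W lam s := by linarith
  have h2 : 0 ≤ (1 - s) * (T - condDiv2 lam U (Wacc W)) :=
    mul_nonneg (by linarith) (by linarith)
  linarith

lemma continuous_base {b : ℝ} (hb : 0 < b) : Continuous (fun s : ℝ => b ^ s) :=
  continuous_iff_continuousAt.2 (fun _ => Real.continuousAt_const_rpow (ne_of_gt hb))

lemma continuous_num {p : X × X} {y : Y} (h1 : 0 < W p.1 y) (h2 : 0 < W p.2 y) :
    Continuous (fun s : ℝ => W p.1 y ^ (1 - s) * W p.2 y ^ s) :=
  ((continuous_base h1).comp (continuous_const.sub continuous_id)).mul (continuous_base h2)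

lemma continuous_Zf (p : X × X) : Continuous (Zf W p) := by
  apply continuous_finset_sum
  intro y hy
  obtain ⟨h1, h2⟩ := mem_SuppP.1 hy
  exact continuous_num h1 h2

lemma continuous_uf {p : X × X} {y : Y}
    (hW0 : ∀ x y, 0 ≤ W x y)
    (hsupp : ∀ p : X × X, 0 < ∑ y, if 0 < W p.2 y then W p.1 y else 0)
    (hy : y ∈ SuppP W p) : Continuous (fun s : ℝ => uf W p y s) := by
  obtain ⟨h1, h2⟩ := mem_SuppP.1 hy
  exact (continuous_num h1 h2).div (continuous_Zf p)
    (fun s => ne_of_gt (Zf_pos hW0 hsupp p s))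

lemma continuous_aF (hW0 : ∀ x y, 0 ≤ W x y)
    (hsupp : ∀ p : X × X, 0 < ∑ y, if 0 < W p.2 y then W p.1 y else 0)
    (lam : X × X → ℝ) : Continuous (aF W lam) := by
  apply continuous_finset_sum
  intro p _
  apply Continuous.mul continuous_const
  apply continuous_finset_sum
  intro y hy
  obtain ⟨h1, _⟩ := mem_SuppP.1 hy
  exact (continuous_uf hW0 hsupp hy).mul
    (((continuous_uf hW0 hsupp hy).div_const _).log
      (fun s => ne_of_gt (div_pos (uf_pos hW0 hsupp hy s) h1)))

lemma continuous_rF (hW0 : ∀ x y, 0 ≤ W x y)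
    (hsupp : ∀ p : X × X, 0 < ∑ y, if 0 < W p.2 y then W p.1 y else 0)
    (lam : X × X → ℝ) : Continuous (rF W lam) := by
  apply continuous_finset_sum
  intro p _
  apply Continuous.mul continuous_const
  apply continuous_finset_sum
  intro y hy
  obtain ⟨_, h2⟩ := mem_SuppP.1 hy
  exact (continuous_uf hW0 hsupp hy).mul
    (((continuous_uf hW0 hsupp hy).div_const _).log
      (fun s => ne_of_gt (div_pos (uf_pos hW0 hsupp hy s) h2)))

lemma continuous_LF (hW0 : ∀ x y, 0 ≤ W x y)
    (hsupp : ∀ p : X × X, 0 < ∑ y, if 0 < W p.2 y then W p.1 y else 0)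
    (lam : X × X → ℝ) : Continuous (LF W lam) := by
  apply continuous_finset_sum
  intro p _
  exact Continuous.mul continuous_const
    ((continuous_Zf p).log (fun s => ne_of_gt (Zf_pos hW0 hsupp p s)))

lemma dual_val (hW0 : ∀ x y, 0 ≤ W x y) (lam : X × X → ℝ) (T : ℝ) {μ : ℝ} (hμ : 0 < μ) :
    -μ * T - (1 + μ) * ∑ p : X × X, lam p *
        Real.log (∑ y, W p.1 y ^ (μ / (1 + μ)) * W p.2 y ^ (1 / (1 + μ)))
      = GF W lam T (1 / (1 + μ)) := by
  set s := 1 / (1 + μ) with hs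
  have h1μ : (0:ℝ) < 1 + μ := by linarith
  have hs0 : 0 < s := by positivity
  have hs1 : s < 1 := by rw [hs, div_lt_one h1μ]; linarith
  have e1 : μ / (1 + μ) = 1 - s := by rw [hs]; field_simp; ring
  have e2 : (1 - s) / s = μ := by rw [hs]; field_simp; ring
  have e3 : 1 / s = 1 + μ := by rw [hs]; field_simp
  rw [e1, GF, e2, e3]
  congr 1
  congr 1
  apply Finset.sum_congr rfl
  intro p _
  rw [denom_eq hW0 p hs0 hs1]

lemma main_eq (hW0 : ∀ x y, 0 ≤ W x y) (hW1 : ∀ x, ∑ y, W x y = 1)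
    (hsupp : ∀ p : X × X, 0 < ∑ y, if 0 < W p.2 y then W p.1 y else 0)
    (lam : X × X → ℝ) (hl0 : ∀ p, 0 ≤ lam p) (hl1 : ∑ p, lam p = 1)
    (T : ℝ) (hT : condDiv2 lam (tiltedU0 W) (Wacc W) ≤ T) :
    hTwo W lam T
      = sSup {v | ∃ μ : ℝ, 0 < μ ∧
          v = -μ * T - (1 + μ) * ∑ p : X × X, lam p *
            Real.log (∑ y, W p.1 y ^ (μ / (1 + μ)) * W p.2 y ^ (1 / (1 + μ)))} := by
  classical
  rw [hTwo]
  set P : Set ℝ := {d | ∃ U : X × X → Y → ℝ, IsCondDist2 W U ∧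
    condDiv2 lam U (Wacc W) ≤ T ∧ d = condDiv2 lam U (Wrej W)} with hPdef
  set Q : Set ℝ := {v | ∃ μ : ℝ, 0 < μ ∧
    v = -μ * T - (1 + μ) * ∑ p : X × X, lam p *
      Real.log (∑ y, W p.1 y ^ (μ / (1 + μ)) * W p.2 y ^ (1 / (1 + μ)))} with hQdef
  have hcd0 := isCondDist2_tiltedU0 (W := W) hW0 hsupp
  have hr0P : rF W lam 0 ∈ P :=
    ⟨tiltedU0 W, hcd0, hT, (condDiv_tilted0_rej hW0 hsupp lam).symm⟩
  have hrsP : ∀ s ∈ Set.Ioo (0:ℝ) 1, aF W lam s ≤ T → rF W lam s ∈ P := by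
    intro s hs hfeas
    exact ⟨tiltedU W s, isCondDist2_tiltedU hW0 hsupp hs.1 hs.2,
      by rw [condDiv_tilted_acc hW0 hsupp lam hs.1 hs.2]; exact hfeas,
      (condDiv_tilted_rej hW0 hsupp lam hs.1 hs.2).symm⟩
  have hQm : ∀ s ∈ Set.Ioo (0:ℝ) 1, GF W lam T s ∈ Q := by
    intro s hs
    exact dual_mem hW0 lam T hs.1 hs.2
  have hGFle : ∀ s ∈ Set.Ioo (0:ℝ) 1, ∀ d ∈ P, GF W lam T s ≤ d := by
    intro s hs d hd
    obtain ⟨U, hU, hfeas, rfl⟩ := hd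
    exact weak_duality hW0 hsupp lam hl0 T hs.1 hs.2 hU hfeas
  have hQle : ∀ v ∈ Q, ∀ d ∈ P, v ≤ d := by
    intro v hv d hd
    obtain ⟨μ, hμ, rfl⟩ := hv
    rw [dual_val hW0 lam T hμ]
    have h1μ : (0:ℝ) < 1 + μ := by linarith
    exact hGFle _ ⟨by positivity, by rw [div_lt_one h1μ]; linarith⟩ d hd
  have hPne : P.Nonempty := ⟨_, hr0P⟩
  have hQne : Q.Nonempty := ⟨_, hQm (1/2) (by norm_num)⟩
  have hbelow : BddBelow P :=
    ⟨GF W lam T (1/2), fun d hd => hGFle (1/2) (by norm_num) d hd⟩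
  have habove : BddAbove Q :=
    ⟨rF W lam 0, fun v hv => hQle v hv _ hr0P⟩
  have le1 : sSup Q ≤ sInf P :=
    csSup_le hQne (fun v hv => le_csInf hPne (fun d hd => hQle v hv d hd))
  have hne1 : (𝓝[Set.Ioo (0:ℝ) 1] 1).NeBot := right_nhdsWithin_Ioo_neBot one_pos
  have hne0 : (𝓝[Set.Ioo (0:ℝ) 1] 0).NeBot := left_nhdsWithin_Ioo_neBot one_pos
  have trF1 : Filter.Tendsto (rF W lam) (𝓝[Set.Ioo (0:ℝ) 1] 1) (𝓝 (rF W lam 1)) :=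
    ((continuous_rF hW0 hsupp lam).tendsto 1).mono_left nhdsWithin_le_nhds
  have trF0 : Filter.Tendsto (rF W lam) (𝓝[Set.Ioo (0:ℝ) 1] 0) (𝓝 (rF W lam 0)) :=
    ((continuous_rF hW0 hsupp lam).tendsto 0).mono_left nhdsWithin_le_nhds
  have tGF1 : Filter.Tendsto (GF W lam T) (𝓝[Set.Ioo (0:ℝ) 1] 1) (𝓝 (rF W lam 1)) := by
    have c : Filter.Tendsto (fun s : ℝ => rF W lam s + ((1 - s) / s) * (aF W lam s - T))
        (𝓝 (1:ℝ)) (𝓝 (rF W lam 1 + ((1 - 1) / 1) * (aF W lam 1 - T))) := by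
      apply Filter.Tendsto.add ((continuous_rF hW0 hsupp lam).tendsto 1)
      apply Filter.Tendsto.mul
      · exact Filter.Tendsto.div ((continuous_const.sub continuous_id).tendsto 1)
          (continuous_id.tendsto 1) one_ne_zero
      · exact Filter.Tendsto.sub ((continuous_aF hW0 hsupp lam).tendsto 1) tendsto_const_nhds
    have c' : Filter.Tendsto (fun s : ℝ => rF W lam s + ((1 - s) / s) * (aF W lam s - T))
        (𝓝[Set.Ioo (0:ℝ) 1] 1) (𝓝 (rF W lam 1)) := by
      have : rF W lam 1 + ((1 - 1) / 1) * (aF W lam 1 - T) = rF W lam 1 := by norm_num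
      rw [← this]
      exact c.mono_left nhdsWithin_le_nhds
    apply Filter.Tendsto.congr' _ c'
    exact Filter.eventuallyEq_of_mem self_mem_nhdsWithin
      (fun s hs => (GF_eq hW0 hsupp lam T hs.1).symm)
  have le2 : sInf P ≤ sSup Q := by
    by_cases hcase : ∃ s ∈ Set.Ioo (0:ℝ) 1, aF W lam s = T
    · obtain ⟨s0, hs0m, hEq⟩ := hcase
      have hGFr : GF W lam T s0 = rF W lam s0 := by
        rw [GF_eq hW0 hsupp lam T hs0m.1, hEq, sub_self, mul_zero, add_zero]
      calc sInf P ≤ rF W lam s0 := csInf_le hbelow (hrsP s0 hs0m (le_of_eq hEq))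
        _ = GF W lam T s0 := hGFr.symm
        _ ≤ sSup Q := le_csSup habove (hQm s0 hs0m)
    · have hdi : (∀ s ∈ Set.Ioo (0:ℝ) 1, aF W lam s < T)
          ∨ (∀ s ∈ Set.Ioo (0:ℝ) 1, T < aF W lam s) := by
        by_contra h
        push_neg at h
        obtain ⟨⟨s1, hs1m, h1⟩, ⟨s2, hs2m, h2⟩⟩ := h
        have h1' : T < aF W lam s1 :=
          lt_of_le_of_ne h1 (fun e => hcase ⟨s1, hs1m, e.symm⟩)
        have h2' : aF W lam s2 < T :=
          lt_of_le_of_ne h2 (fun e => hcase ⟨s2, hs2m, e⟩)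
        have hsub := intermediate_value_uIcc
          (Continuous.continuousOn (continuous_aF hW0 hsupp lam) (s := Set.uIcc s2 s1))
        have hTmem : T ∈ Set.uIcc (aF W lam s2) (aF W lam s1) :=
          Set.mem_uIcc.2 (Or.inl ⟨le_of_lt h2', le_of_lt h1'⟩)
        obtain ⟨s0, hs0m, hfs0⟩ := hsub hTmem
        apply hcase
        refine ⟨s0, ?_, hfs0⟩
        have hmm := Set.mem_uIcc.1 hs0m
        constructor
        · rcases hmm with ⟨hl, _⟩ | ⟨hl, _⟩
          · exact lt_of_lt_of_le hs2m.1 hl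
          · exact lt_of_lt_of_le hs1m.1 hl
        · rcases hmm with ⟨_, hr⟩ | ⟨_, hr⟩
          · exact lt_of_le_of_lt hr hs1m.2
          · exact lt_of_le_of_lt hr hs2m.2
      rcases hdi with hlt | hgt
      · have l1 : sInf P ≤ rF W lam 1 :=
          ge_of_tendsto trF1 (Filter.eventually_of_mem self_mem_nhdsWithin
            (fun s hs => csInf_le hbelow (hrsP s hs (le_of_lt (hlt s hs)))))
        have l2 : rF W lam 1 ≤ sSup Q :=
          le_of_tendsto tGF1 (Filter.eventually_of_mem self_mem_nhdsWithin
            (fun s hs => le_csSup habove (hQm s hs)))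
        linarith
      · have l2 : rF W lam 0 ≤ sSup Q := by
          apply le_of_tendsto trF0 (Filter.eventually_of_mem self_mem_nhdsWithin
            (fun s hs => ?_))
          have hle : rF W lam s ≤ GF W lam T s := by
            rw [GF_eq hW0 hsupp lam T hs.1]
            have : 0 ≤ ((1 - s) / s) * (aF W lam s - T) :=
              mul_nonneg (le_of_lt (div_pos (by linarith [hs.2]) hs.1))
                (by linarith [hgt s hs])
            linarith
          exact le_trans hle (le_csSup habove (hQm s hs))
        have l1 : sInf P ≤ rF W lam 0 := csInf_le hbelow hr0P
        linarith
  exact le_antisymm le2 le1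

end
end HTwoAux

/-- variational characterization of `h(T,λ)`:
`h(T,λ) = sup_{μ>0} [ −μT − (1+μ) ∑ λ(x₁,x₂) log ∑_y W(y|x₁)^{μ/(1+μ)} W(y|x₂)^{1/(1+μ)} ]`,
and for each fixed `μ > 0` the Lagrangian `D(U‖W_r|λ) + μ D(U‖W_a|λ)` is minimized
over conditional distributions `U` by the tilted channel `U_s` with `s = 1/(1+μ)`. -/
theorem hTwo_variational {X Y : Type} [Fintype X] [Fintype Y]
    (W : X → Y → ℝ) (hW0 : ∀ x y, 0 ≤ W x y) (hW1 : ∀ x, ∑ y, W x y = 1)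
    (hsupp : ∀ p : X × X, 0 < ∑ y, if 0 < W p.2 y then W p.1 y else 0)
    (lam : X × X → ℝ) (hl0 : ∀ p, 0 ≤ lam p) (hl1 : ∑ p, lam p = 1)
    (T : ℝ) (hT : condDiv2 lam (tiltedU0 W) (Wacc W) ≤ T) :
    hTwo W lam T
        = sSup {v | ∃ μ : ℝ, 0 < μ ∧
            v = -μ * T - (1 + μ) * ∑ p : X × X, lam p *
              Real.log (∑ y, W p.1 y ^ (μ / (1 + μ)) * W p.2 y ^ (1 / (1 + μ)))} ∧
      ∀ μ : ℝ, 0 < μ → ∀ U : X × X → Y → ℝ, IsCondDist2 W U →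
        condDiv2 lam (tiltedU W (1 / (1 + μ))) (Wrej W)
            + μ * condDiv2 lam (tiltedU W (1 / (1 + μ))) (Wacc W)
          ≤ condDiv2 lam U (Wrej W) + μ * condDiv2 lam U (Wacc W) :=
  ⟨HTwoAux.main_eq hW0 hW1 hsupp lam hl0 hl1 T hT,
    fun _ hμ _ hU => HTwoAux.part2 hW0 hsupp lam hl0 hμ hU⟩
end

section
/- For any DMC W, any feedback encoding scheme of length n with two messages m₁, m₂, and any erasure-free decoder with decoding regions D₁, D₂ partitioning Y^n: if the error probability of message m₂ is zero (P(D₁ | m₂) = 0), then the error probability of message m₁ satisfies P(D₂ | m₁) ≥ exp(−n T₀), where T₀ = max_{x, x̃} [ −log ∑_{y : W(y|x̃) > 0} W(y|x) ]. -/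
open scoped BigOperators

lemma sum_prod_kernel {Y : Type} [Fintype Y] :
    ∀ (n : ℕ) (q : (t : Fin n) → (Fin t.1 → Y) → Y → ℝ),
    (∀ t pre, ∑ b, q t pre b = 1) →
    ∑ y : Fin n → Y, ∏ t, q t (fun i => y ⟨i.1, lt_trans i.2 t.2⟩) (y t) = 1 := by
  intro n
  induction n with
  | zero => intro q hq; simp
  | succ n ih =>
    intro q hq
    have key : ∀ (z : Fin n → Y) (a : Y),
        (∏ t : Fin (n+1), q t (fun i => (Fin.snoc z a : Fin (n+1) → Y) ⟨i.1, lt_trans i.2 t.2⟩) ((Fin.snoc z a : Fin (n+1) → Y) t))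
        = (∏ t : Fin n, q t.castSucc (fun i => z ⟨i.1, lt_trans i.2 t.2⟩) (z t))
          * q (Fin.last n) (fun i => z i) a := by
      intro z a
      rw [Fin.prod_univ_castSucc]
      congr 1
      · apply Finset.prod_congr rfl
        intro t _
        have h1 : (fun i : Fin (t.castSucc.1) => (Fin.snoc z a : Fin (n+1) → Y) ⟨i.1, lt_trans i.2 t.castSucc.2⟩)
            = (fun i : Fin t.1 => z ⟨i.1, lt_trans i.2 t.2⟩) := by
          funext i
          have : (⟨i.1, lt_trans i.2 t.castSucc.2⟩ : Fin (n+1)) = Fin.castSucc ⟨i.1, lt_trans i.2 t.2⟩ := rfl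
          rw [this, Fin.snoc_castSucc]
        have h2 : (Fin.snoc z a : Fin (n+1) → Y) t.castSucc = z t := by simp
        exact congrArg₂ (fun pre b => q t.castSucc pre b) h1 h2
      · have h1 : (fun i : Fin (Fin.last n).1 => (Fin.snoc z a : Fin (n+1) → Y) ⟨i.1, lt_trans i.2 (Fin.last n).2⟩)
            = (fun i : Fin n => z i) := by
          funext i
          have : (⟨i.1, lt_trans i.2 (Fin.last n).2⟩ : Fin (n+1)) = Fin.castSucc i := rfl
          rw [this, Fin.snoc_castSucc]
        have h2 : (Fin.snoc z a : Fin (n+1) → Y) (Fin.last n) = a := by simp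
        exact congrArg₂ (fun pre b => q (Fin.last n) pre b) h1 h2
    rw [← Equiv.sum_comp (Fin.snocEquiv fun _ => Y)]
    simp only [Fin.snocEquiv, Equiv.coe_fn_mk]
    rw [Fintype.sum_prod_type, Finset.sum_comm]
    calc ∑ z : Fin n → Y, ∑ a : Y, (∏ t : Fin (n+1), q t (fun i => (Fin.snoc z a : Fin (n+1) → Y) ⟨i.1, lt_trans i.2 t.2⟩) ((Fin.snoc z a : Fin (n+1) → Y) t))
        = ∑ z : Fin n → Y, ∏ t : Fin n, q t.castSucc (fun i => z ⟨i.1, lt_trans i.2 t.2⟩) (z t) := by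
          apply Finset.sum_congr rfl; intro z _
          rw [Finset.sum_congr rfl (fun a _ => key z a), ← Finset.mul_sum,
            hq (Fin.last n) (fun i => z i), mul_one]
      _ = 1 := ih _ (fun t pre => hq t.castSucc pre)


/-- two-message converse with zero error for one message. For any
feedback encoding scheme of length `n` with two messages and an erasure-free
decoder given by a partition of `Y^n` (`Dec y = false` decodes `m₁`, `Dec y = true`
decodes `m₂`), if message `m₂` has zero error probability then message `m₁` has
error probability at least `exp(−n T₀)` with
`T₀ = max_{x,x̃}[−log ∑_{y : W(y|x̃)>0} W(y|x)]` (assumed finite: all these sums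
are positive, i.e. the zero-error capacity is zero). -/
theorem two_message_zero_error_converse {X Y : Type} [Fintype X] [Fintype Y]
    [Nonempty X]
    (W : X → Y → ℝ) (hW0 : ∀ x y, 0 ≤ W x y) (hW1 : ∀ x, ∑ y, W x y = 1)
    (hC0 : ∀ x x' : X, 0 < ∑ y, if 0 < W x' y then W x y else 0)
    (n : ℕ) (enc : Bool → (t : Fin n) → (Fin t.1 → Y) → X)
    (Dec : (Fin n → Y) → Bool)
    (T0 : ℝ)
    (hT0 : T0 = ⨆ p : X × X, -Real.log (∑ y, if 0 < W p.2 y then W p.1 y else 0))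
    (P : Bool → (Fin n → Y) → ℝ)
    (hP : ∀ m y, P m y = ∏ t, W (enc m t fun i => y ⟨i.1, lt_trans i.2 t.2⟩) (y t))
    (herrfree : ∑ y : Fin n → Y, (if Dec y = false then P true y else 0) = 0) :
    Real.exp (-(n * T0)) ≤ ∑ y : Fin n → Y, if Dec y = true then P false y else 0 := by
  set S : X → X → ℝ := fun x x' => ∑ y, if 0 < W x' y then W x y else 0 with hSdef
  have hS : ∀ x x', Real.exp (-T0) ≤ S x x' := by
    intro x x'
    have hb : BddAbove (Set.range fun p : X × X =>
        -Real.log (∑ y, if 0 < W p.2 y then W p.1 y else 0)) :=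
      (Set.finite_range _).bddAbove
    have h1 : -Real.log (S x x') ≤ T0 := by
      rw [hT0]; exact le_ciSup hb (x, x')
    have h2 : -T0 ≤ Real.log (S x x') := by linarith
    calc Real.exp (-T0) ≤ Real.exp (Real.log (S x x')) := Real.exp_le_exp.2 h2
      _ = S x x' := Real.exp_log (hC0 x x')
  set q : (t : Fin n) → (Fin t.1 → Y) → Y → ℝ := fun t pre b =>
    (if 0 < W (enc true t pre) b then W (enc false t pre) b else 0) /
      S (enc false t pre) (enc true t pre) with hqdef
  have hq0 : ∀ t pre b, 0 ≤ q t pre b := by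
    intro t pre b
    apply div_nonneg
    · split <;> [exact hW0 _ _; exact le_rfl]
    · exact (hC0 _ _).le
  have hq1 : ∀ t pre, ∑ b, q t pre b = 1 := by
    intro t pre
    rw [hqdef, ← Finset.sum_div]
    exact div_self (hC0 (enc false t pre) (enc true t pre)).ne'
  set Q : (Fin n → Y) → ℝ := fun y =>
    ∏ t, q t (fun i => y ⟨i.1, lt_trans i.2 t.2⟩) (y t) with hQdef
  have hQ0 : ∀ y, 0 ≤ Q y := fun y => Finset.prod_nonneg fun t _ => hq0 _ _ _
  have hQsum : ∑ y, Q y = 1 := sum_prod_kernel n q hq1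
  have hP0 : ∀ m y, 0 ≤ P m y := by
    intro m y; rw [hP]; exact Finset.prod_nonneg fun t _ => hW0 _ _
  -- Q vanishes where P true vanishes
  have hPtrue0 : ∀ y, Dec y = false → P true y = 0 := by
    intro y hy
    have := (Finset.sum_eq_zero_iff_of_nonneg (fun y _ => by
      split <;> [exact hP0 true y; exact le_rfl])).1 herrfree y (Finset.mem_univ y)
    simpa [hy] using this
  have hQvanish : ∀ y, Dec y = false → Q y = 0 := by
    intro y hy
    have h := hPtrue0 y hy
    rw [hP] at h
    obtain ⟨t, _, ht⟩ := Finset.prod_eq_zero_iff.1 h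
    apply Finset.prod_eq_zero (Finset.mem_univ t)
    rw [hqdef]
    simp only
    rw [if_neg (by rw [ht]; exact lt_irrefl 0), zero_div]
  -- pointwise bound
  have hQle : ∀ y, Q y ≤ Real.exp (n * T0) * P false y := by
    intro y
    have : Q y ≤ ∏ t : Fin n, Real.exp T0 *
        W (enc false t fun i => y ⟨i.1, lt_trans i.2 t.2⟩) (y t) := by
      apply Finset.prod_le_prod (fun t _ => hq0 _ _ _)
      intro t _
      set pre := fun i : Fin t.1 => y ⟨i.1, lt_trans i.2 t.2⟩
      have hnum : (if 0 < W (enc true t pre) (y t) then W (enc false t pre) (y t) else 0)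
          ≤ W (enc false t pre) (y t) := by split <;> [exact le_rfl; exact hW0 _ _]
      have hSpos : (0:ℝ) < S (enc false t pre) (enc true t pre) := hC0 _ _
      have hinv : 1 / S (enc false t pre) (enc true t pre) ≤ Real.exp T0 := by
        rw [div_le_iff₀ hSpos]
        calc (1:ℝ) = Real.exp T0 * Real.exp (-T0) := by
              rw [← Real.exp_add]; simp
          _ ≤ Real.exp T0 * S (enc false t pre) (enc true t pre) :=
              mul_le_mul_of_nonneg_left (hS _ _) (Real.exp_nonneg T0)
      calc q t pre (y t)
          = (if 0 < W (enc true t pre) (y t) then W (enc false t pre) (y t) else 0) *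
            (1 / S (enc false t pre) (enc true t pre)) := by
            rw [hqdef]; ring
        _ ≤ W (enc false t pre) (y t) * Real.exp T0 := by
            apply mul_le_mul hnum hinv (by positivity) (hW0 _ _)
        _ = Real.exp T0 * W (enc false t pre) (y t) := mul_comm _ _
    calc Q y ≤ _ := this
      _ = Real.exp T0 ^ n * ∏ t : Fin n, W (enc false t fun i => y ⟨i.1, lt_trans i.2 t.2⟩) (y t) := by
          rw [Finset.prod_mul_distrib, Finset.prod_const, Finset.card_univ, Fintype.card_fin]
      _ = Real.exp (n * T0) * P false y := by
          rw [hP, ← Real.exp_nat_mul, mul_comm (n:ℝ) T0, mul_comm T0 (n:ℝ)]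
  -- sum of Q over D₂ is 1
  have hQD2 : ∑ y : Fin n → Y, (if Dec y = true then Q y else 0) = 1 := by
    rw [← hQsum]
    apply Finset.sum_congr rfl
    intro y _
    by_cases hy : Dec y = true
    · simp [hy]
    · have : Dec y = false := by simpa using hy
      simp [hy, hQvanish y this]
  have hfinal : (1:ℝ) ≤ Real.exp (n * T0) * ∑ y : Fin n → Y, (if Dec y = true then P false y else 0) := by
    rw [← hQD2, Finset.mul_sum]
    apply Finset.sum_le_sum
    intro y _
    by_cases hy : Dec y = true
    · simp only [hy, if_true]; exact hQle y
    · simp [hy]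
  have hexp : (0:ℝ) < Real.exp (n * T0) := Real.exp_pos _
  rw [← div_le_iff₀' hexp] at hfinal
  calc Real.exp (-(n * T0)) = 1 / Real.exp (n * T0) := by
        rw [Real.exp_neg]; ring
    _ ≤ _ := hfinal
end
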